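/- arXiv:1506.05734 — 2 statements merged into one kernel-verified Lean document; each statement's English description precedes it below -/
import Mathlib

section
/- The B-polynomials satisfy: (i) for all j, k, m, s ≥ 0 with s ≠ m, ∫ B_{(2k+1)·2^s} · B_{(2j+1)·2^m} dμ = 0; (ii) for every n ≥ 1 with binary digits i_0,…,i_m, ||B_n||² = ∏_{k=0}^m ||Q_{2^k}||^{2 i_k} = ∏_{k : i_k = 1} ||Q_{2^k}||². -/
open Polynomial MeasureTheory Filter

/-- `r γ s` : the recursively defined scales `r 0 = 1`, `r (s+1) = γ (s+1) * (r s)²`. -/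
noncomputable def r (γ : ℕ → ℝ) : ℕ → ℝ
  | 0 => 1
  | s + 1 => γ (s + 1) * (r γ s) ^ 2

/-- `P γ s` : the polynomial `P_{2^s}`, with `P_1 = X - 1` and
`P_{2^{s+1}} = P_{2^s} · (P_{2^s} + r_s)`. -/
noncomputable def P (γ : ℕ → ℝ) : ℕ → Polynomial ℝ
  | 0 => X - 1
  | s + 1 => P γ s * (P γ s + C (r γ s))

/-- The integral `∫ f dν_s` of a function `f` against the normalized counting measure `ν_s`
on the `2^s` (simple, real) zeros of `P_{2^s} + r_s/2`. -/
noncomputable def nuInt (γ : ℕ → ℝ) (s : ℕ) (f : ℝ → ℝ) : ℝ :=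
  (((P γ s + C (r γ s / 2)).roots.map f).sum) / 2 ^ s

/-- The `B`-polynomial `B_n = ∏_{k} (Q_{2^k})^{i_k}` where `n = Σ i_k 2^k` is the binary
expansion of `n` (all set bits of `n` are `< n` for `n ≥ 1`). -/
noncomputable def Bpoly (Q : ℕ → Polynomial ℝ) (n : ℕ) : Polynomial ℝ :=
  ∏ k ∈ Finset.range n, if Nat.testBit n k then Q (2 ^ k) else 1

section Basic
variable {γ : ℕ → ℝ}

lemma r_pos (hγ : ∀ s : ℕ, 0 < γ (s + 1) ∧ γ (s + 1) < 1 / 4) (s : ℕ) : 0 < r γ s := by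
  induction s with
  | zero => norm_num [r]
  | succ s ih => have := (hγ s).1; rw [r]; positivity

lemma P_zero : P γ 0 = X - C 1 := by rw [P]; simp

lemma P_monic_natDegree (s : ℕ) : (P γ s).Monic ∧ (P γ s).natDegree = 2 ^ s := by
  induction s with
  | zero => rw [P_zero]; exact ⟨monic_X_sub_C 1, natDegree_X_sub_C 1⟩
  | succ s ih =>
    obtain ⟨hm, hd⟩ := ih
    have hdeg : (P γ s).degree = (2 ^ s : ℕ) := by
      rw [degree_eq_natDegree hm.ne_zero, hd]
    have hCm : (P γ s + C (r γ s)).Monic :=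
      hm.add_of_left (lt_of_le_of_lt degree_C_le (by rw [hdeg]; exact_mod_cast Nat.pow_pos (n := s) (by norm_num : 0 < 2)))
    refine ⟨hm.mul hCm, ?_⟩
    rw [P, hm.natDegree_mul hCm, natDegree_add_C, hd]
    ring

end Basic

lemma P_monic {γ : ℕ → ℝ} (s : ℕ) : (P γ s).Monic := (P_monic_natDegree s).1
lemma P_natDegree {γ : ℕ → ℝ} (s : ℕ) : (P γ s).natDegree = 2 ^ s := (P_monic_natDegree s).2

lemma PC_monic {γ : ℕ → ℝ} (s : ℕ) (u : ℝ) : (P γ s - C u).Monic := by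
  have hlt : (-C u).degree < (P γ s).degree := by
    rw [degree_neg, degree_eq_natDegree (P_monic s).ne_zero, P_natDegree]
    exact lt_of_le_of_lt degree_C_le (by exact_mod_cast Nat.pow_pos (n := s) (by norm_num : 0 < 2))
  have := (P_monic (γ := γ) s).add_of_left hlt
  simpa [sub_eq_add_neg] using this

lemma PC_natDegree {γ : ℕ → ℝ} (s : ℕ) (u : ℝ) : (P γ s - C u).natDegree = 2 ^ s := by
  rw [natDegree_sub_C, P_natDegree]

lemma PC_degree {γ : ℕ → ℝ} (s : ℕ) (u : ℝ) : (P γ s - C u).degree = (2 ^ s : ℕ) := by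
  rw [degree_eq_natDegree (PC_monic s u).ne_zero, PC_natDegree]

/-- the quadratic factorization -/
lemma P_succ_factor {γ : ℕ → ℝ} (t : ℕ) {y a b : ℝ} (hab : a + b = -(r γ t)) (hab2 : a * b = -y) :
    P γ (t+1) - C y = (P γ t - C a) * (P γ t - C b) := by
  have h1 : C a * C b = - C y := by rw [← C_mul, hab2, map_neg]
  have h2 : C a + C b = - C (r γ t) := by rw [← C_add, hab, map_neg]
  rw [show P γ (t+1) = P γ t * (P γ t + C (r γ t)) from rfl]
  linear_combination (P γ t) * h2 - h1

/-- existence of the two preimage values -/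
lemma quad_roots {γ : ℕ → ℝ} (hγ : ∀ s : ℕ, 0 < γ (s + 1) ∧ γ (s + 1) < 1 / 4)
    (t : ℕ) {y : ℝ} (hy1 : -(r γ (t+1)) < y) (hy2 : y < 0) :
    ∃ a b : ℝ, a + b = -(r γ t) ∧ a * b = -y ∧
      -(r γ t) < a ∧ a < 0 ∧ -(r γ t) < b ∧ b < 0 := by
  have hrt := r_pos hγ t
  have hD : (0:ℝ) < r γ t ^ 2 + 4 * y := by
    have h1 := (hγ t).1
    have h2 := (hγ t).2
    have : r γ (t+1) = γ (t+1) * r γ t ^ 2 := rfl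
    nlinarith [sq_nonneg (r γ t)]
  set D := r γ t ^ 2 + 4 * y with hDdef
  have hsq : Real.sqrt D ^ 2 = D := Real.sq_sqrt hD.le
  have hsqpos : 0 < Real.sqrt D := Real.sqrt_pos.mpr hD
  have hsqlt : Real.sqrt D < r γ t := by
    rw [show r γ t = Real.sqrt (r γ t ^ 2) from (Real.sqrt_sq hrt.le).symm]
    exact Real.sqrt_lt_sqrt hD.le (by nlinarith)
  refine ⟨(-(r γ t) - Real.sqrt D) / 2, (-(r γ t) + Real.sqrt D) / 2, by ring, ?_, ?_, ?_, ?_, ?_⟩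
  · field_simp
    nlinarith
  all_goals nlinarith

lemma roots_card {γ : ℕ → ℝ} (hγ : ∀ s : ℕ, 0 < γ (s + 1) ∧ γ (s + 1) < 1 / 4) :
    ∀ t : ℕ, ∀ y : ℝ, -(r γ t) < y → y < 0 →
      Multiset.card ((P γ t - C y).roots) = 2 ^ t := by
  intro t
  induction t with
  | zero =>
    intro y _ _
    rw [P_zero, show (X : Polynomial ℝ) - C 1 - C y = X - C (1 + y) from by rw [C_add]; ring,
      roots_X_sub_C]
    rfl
  | succ t ih =>
    intro y hy1 hy2
    obtain ⟨a, b, hab, hab2, ha1, ha2, hb1, hb2⟩ := quad_roots hγ t hy1 hy2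
    rw [P_succ_factor t hab hab2,
      roots_mul (mul_ne_zero (PC_monic t a).ne_zero (PC_monic t b).ne_zero)]
    rw [Multiset.card_add, ih a ha1 ha2, ih b hb1 hb2]
    ring

/-- sum of `p` over the roots of `P γ t - C u` -/
noncomputable def rsum (γ : ℕ → ℝ) (t : ℕ) (u : ℝ) (p : Polynomial ℝ) : ℝ :=
  (((P γ t - C u).roots).map (fun x => p.eval x)).sum

lemma rsum_split {γ : ℕ → ℝ} (t : ℕ) {y a b : ℝ} (hab : a + b = -(r γ t)) (hab2 : a * b = -y)
    (p : Polynomial ℝ) : rsum γ (t+1) y p = rsum γ t a p + rsum γ t b p := by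
  unfold rsum
  rw [P_succ_factor t hab hab2,
    roots_mul (mul_ne_zero (PC_monic t a).ne_zero (PC_monic t b).ne_zero),
    Multiset.map_add, Multiset.sum_add]

lemma eval_P_of_root {γ : ℕ → ℝ} {t : ℕ} {u x : ℝ} (hx : x ∈ (P γ t - C u).roots) :
    (P γ t).eval x = u := by
  have := (mem_roots (PC_monic t u).ne_zero).mp hx
  simp only [IsRoot, eval_sub, eval_C, sub_eq_zero] at this
  exact this

lemma rsum_decomp {γ : ℕ → ℝ} (t : ℕ) (u : ℝ) (p : Polynomial ℝ) :
    rsum γ t u p = rsum γ t u (p %ₘ (P γ t)) + u * rsum γ t u (p /ₘ (P γ t)) := by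
  have h : ∀ x ∈ (P γ t - C u).roots,
      p.eval x = (p %ₘ (P γ t)).eval x + u * (p /ₘ (P γ t)).eval x := by
    intro x hx
    have hp := modByMonic_add_div p (P γ t)
    nth_rewrite 1 [← hp]
    simp [eval_P_of_root hx]
    try ring
  unfold rsum
  rw [Multiset.map_congr rfl h, Multiset.sum_map_add, Multiset.sum_map_mul_left]

lemma deg_mod {γ : ℕ → ℝ} (t : ℕ) (p : Polynomial ℝ) :
    (p %ₘ (P γ t)).degree < ((2 ^ t : ℕ) : WithBot ℕ) := by
  have := degree_modByMonic_lt p (P_monic (γ := γ) t)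
  rwa [degree_eq_natDegree (P_monic t).ne_zero, P_natDegree] at this

lemma deg_div {γ : ℕ → ℝ} (t : ℕ) (p : Polynomial ℝ)
    (hp : p.degree < ((2 ^ (t+1) : ℕ) : WithBot ℕ)) :
    (p /ₘ (P γ t)).degree < ((2 ^ t : ℕ) : WithBot ℕ) := by
  rcases eq_or_ne (p /ₘ (P γ t)) 0 with h | h
  · rw [h, degree_zero]; exact_mod_cast WithBot.bot_lt_coe (2 ^ t : ℕ)
  · have hp0 : p ≠ 0 := by
      intro h0; rw [h0, zero_divByMonic] at h; exact h rfl
    rw [← natDegree_lt_iff_degree_lt h]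
    rw [natDegree_divByMonic p (P_monic t), P_natDegree]
    have := (natDegree_lt_iff_degree_lt hp0).mpr hp
    have h2 : (2:ℕ) ^ (t+1) = 2 ^ t + 2 ^ t := by ring
    omega

lemma rsum_indep {γ : ℕ → ℝ} (hγ : ∀ s : ℕ, 0 < γ (s + 1) ∧ γ (s + 1) < 1 / 4) :
    ∀ t : ℕ, ∀ p : Polynomial ℝ, p.degree < ((2 ^ t : ℕ) : WithBot ℕ) →
    ∀ y y' : ℝ, -(r γ t) < y → y < 0 → -(r γ t) < y' → y' < 0 →
    rsum γ t y p = rsum γ t y' p := by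
  intro t
  induction t with
  | zero =>
    intro p hp y y' _ _ _ _
    have : p = C (p.coeff 0) :=
      eq_C_of_degree_le_zero (by
        have h1 : ((2 ^ 0 : ℕ) : WithBot ℕ) = 1 := by norm_num
        rw [h1] at hp
        exact Nat.WithBot.lt_one_iff_le_zero.mp hp)
    rw [this]
    unfold rsum
    rw [P_zero, show (X : Polynomial ℝ) - C 1 - C y = X - C (1 + y) from by rw [C_add]; ring,
      show (X : Polynomial ℝ) - C 1 - C y' = X - C (1 + y') from by rw [C_add]; ring,
      roots_X_sub_C, roots_X_sub_C]
    simp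
  | succ t ih =>
    intro p hp y y' hy1 hy2 hy1' hy2'
    obtain ⟨a, b, hab, hab2, ha1, ha2, hb1, hb2⟩ := quad_roots hγ t hy1 hy2
    obtain ⟨a', b', hab', hab2', ha1', ha2', hb1', hb2'⟩ := quad_roots hγ t hy1' hy2'
    rw [rsum_split t hab hab2, rsum_split t hab' hab2']
    rw [rsum_decomp t a p, rsum_decomp t b p, rsum_decomp t a' p, rsum_decomp t b' p]
    have hm := deg_mod (γ := γ) t p
    have hd := deg_div (γ := γ) t p hp
    have e1 := ih _ hm b a hb1 hb2 ha1 ha2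
    have e2 := ih _ hm a' a ha1' ha2' ha1 ha2
    have e3 := ih _ hm b' a hb1' hb2' ha1 ha2
    have f1 := ih _ hd b a hb1 hb2 ha1 ha2
    have f2 := ih _ hd a' a ha1' ha2' ha1 ha2
    have f3 := ih _ hd b' a hb1' hb2' ha1 ha2
    rw [e1, e2, e3, f1, f2, f3]
    have key : a + b = a' + b' := by rw [hab, hab']
    linear_combination (rsum γ t a (p /ₘ P γ t)) * key

lemma midpoint_mem {γ : ℕ → ℝ} (hγ : ∀ s : ℕ, 0 < γ (s + 1) ∧ γ (s + 1) < 1 / 4) (t : ℕ) :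
    -(r γ t) < -(r γ t) / 2 ∧ -(r γ t) / 2 < 0 := by
  have := r_pos hγ t
  constructor <;> linarith

lemma rsum_zero_propagate {γ : ℕ → ℝ} (hγ : ∀ s : ℕ, 0 < γ (s + 1) ∧ γ (s + 1) < 1 / 4)
    (s : ℕ) (g : Polynomial ℝ) (hdeg : g.degree < ((2 ^ (s+1) : ℕ) : WithBot ℕ))
    (h0 : rsum γ s (-(r γ s) / 2) g = 0) :
    ∀ t, s ≤ t → rsum γ t (-(r γ t) / 2) g = 0 := by
  intro t hst
  induction t, hst using Nat.le_induction with
  | base => exact h0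
  | succ t hst ih =>
    have hdeg' : g.degree < ((2 ^ (t+1) : ℕ) : WithBot ℕ) := by
      refine lt_of_lt_of_le hdeg ?_
      exact_mod_cast Nat.pow_le_pow_right (by norm_num) (by omega)
    obtain ⟨hm1, hm2⟩ := midpoint_mem hγ (t+1)
    obtain ⟨a, b, hab, hab2, ha1, ha2, hb1, hb2⟩ := quad_roots hγ t hm1 hm2
    obtain ⟨hm1', hm2'⟩ := midpoint_mem hγ t
    rw [rsum_split t hab hab2]
    rw [rsum_decomp t a g, rsum_decomp t b g]
    have hm := deg_mod (γ := γ) t g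
    have hd := deg_div (γ := γ) t g hdeg'
    have e1 := rsum_indep hγ t _ hm a (-(r γ t)/2) ha1 ha2 hm1' hm2'
    have e2 := rsum_indep hγ t _ hm b (-(r γ t)/2) hb1 hb2 hm1' hm2'
    have f1 := rsum_indep hγ t _ hd a (-(r γ t)/2) ha1 ha2 hm1' hm2'
    have f2 := rsum_indep hγ t _ hd b (-(r γ t)/2) hb1 hb2 hm1' hm2'
    rw [e1, e2, f1, f2]
    rw [rsum_decomp t (-(r γ t)/2) g] at ih
    linear_combination ih * 2 + (rsum γ t (-(r γ t)/2) (g /ₘ P γ t)) * hab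


lemma nuInt_eq_rsum {γ : ℕ → ℝ} (t : ℕ) (g : Polynomial ℝ) :
    nuInt γ t (fun x => g.eval x) = rsum γ t (-(r γ t) / 2) g / 2 ^ t := by
  unfold nuInt rsum
  congr 3
  rw [sub_eq_add_neg, ← C_neg, neg_div, neg_neg]

lemma rsum_base_zero {γ : ℕ → ℝ} (s : ℕ) (p : Polynomial ℝ) :
    rsum γ s (-(r γ s) / 2) ((P γ s + C (r γ s / 2)) * p) = 0 := by
  unfold rsum
  rw [Multiset.map_congr rfl (fun x hx => ?_), Multiset.map_const, Multiset.sum_replicate,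
    smul_zero]
  have := eval_P_of_root hx
  rw [eval_mul, eval_add, eval_C, this, Function.const_apply]
  ring

lemma nuInt_vanish {γ : ℕ → ℝ} (hγ : ∀ s : ℕ, 0 < γ (s + 1) ∧ γ (s + 1) < 1 / 4)
    (s : ℕ) (p : Polynomial ℝ) (hp : p.degree < ((2 ^ s : ℕ) : WithBot ℕ)) (t : ℕ) (hst : s ≤ t) :
    nuInt γ t (fun x => ((P γ s + C (r γ s / 2)) * p).eval x) = 0 := by
  rw [nuInt_eq_rsum]
  rw [rsum_zero_propagate hγ s _ ?_ (rsum_base_zero s p) t hst]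
  · simp
  · -- degree bound : degree ((P+C)*p) < 2^(s+1)
    rcases eq_or_ne p 0 with h | h
    · simp [h]
      exact_mod_cast WithBot.bot_lt_coe _
    · rw [degree_mul]
      have h1 : (P γ s + C (r γ s / 2)).degree = (2 ^ s : ℕ) := by
        rw [show P γ s + C (r γ s / 2) = P γ s - C (-(r γ s / 2)) from by rw [map_neg]; ring,
          PC_degree]
      rw [h1]
      have h2 := hp
      have : ((2:ℕ) ^ (s+1) : ℕ) = 2 ^ s + 2 ^ s := by ring
      rw [this]
      push_cast
      exact WithBot.add_lt_add_left (by exact_mod_cast (WithBot.coe_ne_bot)) h2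

section Mu
variable {γ : ℕ → ℝ} (hγ : ∀ s : ℕ, 0 < γ (s + 1) ∧ γ (s + 1) < 1 / 4)
    {μ : Measure ℝ} [IsProbabilityMeasure μ]
    (hμint : ∀ p : Polynomial ℝ, Integrable (fun x => p.eval x) μ)
    (hμpos : ∀ p : Polynomial ℝ, p ≠ 0 → 0 < ∫ x, (p.eval x) ^ 2 ∂μ)
    (hμconv : ∀ p : Polynomial ℝ,
      Tendsto (fun s => nuInt γ s (fun x => p.eval x)) atTop (nhds (∫ x, p.eval x ∂μ)))
    {Q : ℕ → Polynomial ℝ} (hQmonic : ∀ n, (Q n).Monic) (hQdeg : ∀ n, (Q n).natDegree = n)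
    (hQorth : ∀ n : ℕ, ∀ p : Polynomial ℝ, p.degree < (n : WithBot ℕ) →
      ∫ x, (Q n).eval x * p.eval x ∂μ = 0)

include hγ hμconv in
lemma Porth (s : ℕ) (p : Polynomial ℝ) (hp : p.degree < ((2 ^ s : ℕ) : WithBot ℕ)) :
    ∫ x, ((P γ s + C (r γ s / 2)) * p).eval x ∂μ = 0 := by
  have h := hμconv ((P γ s + C (r γ s / 2)) * p)
  have hev : (fun t => nuInt γ t (fun x => ((P γ s + C (r γ s / 2)) * p).eval x))
      =ᶠ[atTop] (fun _ => (0:ℝ)) :=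
    Filter.eventually_atTop.2 ⟨s, fun t ht => nuInt_vanish hγ s p hp t ht⟩
  exact (tendsto_nhds_unique (h.congr' hev) tendsto_const_nhds)

include hγ hμint hμpos hμconv hQmonic hQdeg hQorth in
lemma Q_eq (s : ℕ) : Q (2 ^ s) = P γ s + C (r γ s / 2) := by
  set A : Polynomial ℝ := P γ s + C (r γ s / 2) with hA
  have hAm : A.Monic := by
    have : A = P γ s - C (-(r γ s / 2)) := by rw [map_neg]; ring
    rw [this]; exact PC_monic s _
  have hAdeg : A.natDegree = 2 ^ s := by
    rw [hA, natDegree_add_C, P_natDegree]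
  by_contra hne
  set d : Polynomial ℝ := Q (2 ^ s) - A with hd
  have hd0 : d ≠ 0 := sub_ne_zero.mpr hne
  have hddeg : d.degree < ((2 ^ s : ℕ) : WithBot ℕ) := by
    have hde : (Q (2 ^ s)).degree = A.degree := by
      rw [degree_eq_natDegree (hQmonic _).ne_zero, hQdeg,
        degree_eq_natDegree hAm.ne_zero, hAdeg]
    have hlc : (Q (2 ^ s)).leadingCoeff = A.leadingCoeff := by
      rw [(hQmonic _).leadingCoeff, hAm.leadingCoeff]
    have := degree_sub_lt hde (hQmonic (2 ^ s)).ne_zero hlc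
    rwa [degree_eq_natDegree (hQmonic _).ne_zero, hQdeg] at this
  have h1 : ∫ x, (Q (2 ^ s)).eval x * d.eval x ∂μ = 0 := hQorth (2 ^ s) d (by exact_mod_cast hddeg)
  have h2 : ∫ x, (A * d).eval x ∂μ = 0 := Porth hγ hμconv s d hddeg
  have h3 : ∫ x, (d.eval x) ^ 2 ∂μ = 0 := by
    have hfun : (fun x => (d.eval x) ^ 2)
        = fun x => (Q (2 ^ s) * d).eval x - (A * d).eval x := by
      funext x; simp only [eval_mul, eval_sub, hd]; ring
    rw [hfun, integral_sub (hμint _) (hμint _)]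
    have h1' : ∫ x, (Q (2 ^ s) * d).eval x ∂μ = 0 := by
      simpa only [eval_mul] using h1
    rw [h1', h2, sub_zero]
  exact absurd h3 (ne_of_gt (hμpos d hd0))

include hγ hμint hμpos hμconv hQmonic hQdeg hQorth in
lemma Q_sq (s : ℕ) : (Q (2 ^ s)) ^ 2 = Q (2 ^ (s + 1)) + C (r γ s ^ 2 / 4 - r γ (s + 1) / 2) := by
  rw [Q_eq hγ hμint hμpos hμconv hQmonic hQdeg hQorth s,
    Q_eq hγ hμint hμpos hμconv hQmonic hQdeg hQorth (s + 1),
    show P γ (s + 1) = P γ s * (P γ s + C (r γ s)) from rfl]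
  have hc1 : C (r γ s / 2) * C (r γ s / 2) = C (r γ s ^ 2 / 4) := by
    rw [← C_mul]; congr 1; ring
  have hc2 : C (r γ s / 2) + C (r γ s / 2) = C (r γ s) := by
    rw [← C_add]; congr 1; ring
  have hc3 : C (r γ (s + 1) / 2) + C (r γ s ^ 2 / 4 - r γ (s + 1) / 2) = C (r γ s ^ 2 / 4) := by
    rw [← C_add]; congr 1; ring
  linear_combination (P γ s) * hc2 + hc1 - hc3

include hQorth in
lemma key1 (s : ℕ) (h : Polynomial ℝ) (hdeg : h.degree < ((2 ^ s : ℕ) : WithBot ℕ)) :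
    ∫ x, (h * Q (2 ^ s)).eval x ∂μ = 0 := by
  have := hQorth (2 ^ s) h (by exact_mod_cast hdeg)
  simpa only [eval_mul, mul_comm] using this

include hγ hμint hμpos hμconv hQmonic hQdeg hQorth in
lemma key2 (s : ℕ) (h : Polynomial ℝ) (hdeg : h.degree < ((2 ^ (s + 1) : ℕ) : WithBot ℕ)) :
    ∫ x, (h * (Q (2 ^ s)) ^ 2).eval x ∂μ
      = (∫ x, ((Q (2 ^ s)).eval x) ^ 2 ∂μ) * ∫ x, h.eval x ∂μ := by
  set c : ℝ := r γ s ^ 2 / 4 - r γ (s + 1) / 2 with hc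
  have hQQ := Q_sq hγ hμint hμpos hμconv hQmonic hQdeg hQorth s
  have key : ∀ g : Polynomial ℝ, g.degree < ((2 ^ (s + 1) : ℕ) : WithBot ℕ) →
      ∫ x, (g * (Q (2 ^ s)) ^ 2).eval x ∂μ = c * ∫ x, g.eval x ∂μ := by
    intro g hg
    have hsplit : (fun x => (g * (Q (2 ^ s)) ^ 2).eval x)
        = fun x => (g * Q (2 ^ (s + 1))).eval x + c * g.eval x := by
      funext x
      rw [hQQ]
      simp only [eval_mul, eval_add, eval_C]
      ring
    rw [hsplit, integral_add (hμint _) ((hμint g).const_mul c),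
      key1 hQorth (s + 1) g hg, MeasureTheory.integral_const_mul, zero_add]
  have h1 : ∫ x, ((Q (2 ^ s)).eval x) ^ 2 ∂μ = c := by
    have := key 1 (by
      rw [show (1 : Polynomial ℝ).degree = 0 from degree_one]
      exact_mod_cast Nat.pow_pos (n := s + 1) (by norm_num : 0 < 2))
    simpa only [one_mul, eval_one, eval_pow, integral_const, measure_univ, probReal_univ,
      smul_eq_mul, mul_one] using this
  rw [key h hdeg, h1]

end Mu

/-- product of `Q_{2^k}^{e k}` over `k < N` -/
noncomputable def PiE (Q : ℕ → Polynomial ℝ) (N : ℕ) (e : ℕ → ℕ) : Polynomial ℝ :=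
  ∏ k ∈ Finset.range N, (Q (2 ^ k)) ^ (e k)

section Comb
variable {Q : ℕ → Polynomial ℝ} (hQmonic : ∀ n, (Q n).Monic) (hQdeg : ∀ n, (Q n).natDegree = n)

include hQmonic hQdeg in
lemma PiE_natDeg (N : ℕ) (e : ℕ → ℕ) :
    (PiE Q N e).natDegree = ∑ k ∈ Finset.range N, e k * 2 ^ k := by
  rw [PiE, natDegree_prod _ _ (fun k _ => pow_ne_zero _ (hQmonic _).ne_zero)]
  exact Finset.sum_congr rfl fun k _ => by rw [natDegree_pow, hQdeg]

lemma two_pow_sum (s : ℕ) : ∑ k ∈ Finset.range s, 2 ^ k = 2 ^ s - 1 := by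
  induction s with
  | zero => simp
  | succ s ih =>
    rw [Finset.sum_range_succ, ih]
    have : 1 ≤ 2 ^ s := Nat.one_le_two_pow
    have : (2:ℕ) ^ (s+1) = 2 ^ s + 2 ^ s := by ring
    omega

include hQmonic hQdeg in
lemma PiE_nd_le (N : ℕ) (e : ℕ → ℕ) (s c : ℕ) (hsupp : ∀ k, e k ≠ 0 → k < s)
    (hle : ∀ k, e k ≤ c) : (PiE Q N e).natDegree ≤ c * (2 ^ s - 1) := by
  rw [PiE_natDeg hQmonic hQdeg]
  calc ∑ k ∈ Finset.range N, e k * 2 ^ k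
      ≤ ∑ k ∈ Finset.range N, (if k < s then c * 2 ^ k else 0) := by
        refine Finset.sum_le_sum fun k _ => ?_
        by_cases hk : k < s
        · simp only [hk, if_true]; exact Nat.mul_le_mul_right _ (hle k)
        · simp only [hk, if_false]
          rcases Nat.eq_zero_or_pos (e k) with h | h
          · simp [h]
          · exact absurd (hsupp k h.ne') hk
    _ = ∑ k ∈ (Finset.range N).filter (· < s), c * 2 ^ k := (Finset.sum_filter _ _).symm
    _ ≤ ∑ k ∈ Finset.range s, c * 2 ^ k := by
        refine Finset.sum_le_sum_of_subset fun k hk => ?_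
        simp only [Finset.mem_filter, Finset.mem_range] at hk ⊢
        exact hk.2
    _ = c * (2 ^ s - 1) := by rw [← Finset.mul_sum, two_pow_sum]

include hQmonic hQdeg in
lemma PiE_deg_lt2 (N : ℕ) (e : ℕ → ℕ) (s : ℕ) (hsupp : ∀ k, e k ≠ 0 → k < s)
    (hle : ∀ k, e k ≤ 2) : (PiE Q N e).degree < ((2 ^ (s + 1) : ℕ) : WithBot ℕ) := by
  refine lt_of_le_of_lt degree_le_natDegree ?_
  have h1 := PiE_nd_le hQmonic hQdeg N e s 2 hsupp hle
  have h2 : (2:ℕ) ^ (s + 1) = 2 ^ s + 2 ^ s := by ring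
  have h3 : 1 ≤ (2:ℕ) ^ s := Nat.one_le_two_pow
  exact_mod_cast lt_of_le_of_lt h1 (by omega)

include hQmonic hQdeg in
lemma PiE_deg_lt1 (N : ℕ) (e : ℕ → ℕ) (s : ℕ) (hsupp : ∀ k, e k ≠ 0 → k < s)
    (hle : ∀ k, e k ≤ 1) : (PiE Q N e).degree < ((2 ^ s : ℕ) : WithBot ℕ) := by
  refine lt_of_le_of_lt degree_le_natDegree ?_
  have h1 := PiE_nd_le hQmonic hQdeg N e s 1 hsupp hle
  have h3 : 1 ≤ (2:ℕ) ^ s := Nat.one_le_two_pow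
  exact_mod_cast lt_of_le_of_lt h1 (by omega)

lemma PiE_update (N : ℕ) (e : ℕ → ℕ) {k : ℕ} (hk : k ∈ Finset.range N) (v : ℕ) :
    PiE Q N (Function.update e k v)
      = (Q (2 ^ k)) ^ v * ∏ j ∈ (Finset.range N).erase k, (Q (2 ^ j)) ^ (e j) := by
  rw [PiE, ← Finset.mul_prod_erase _ _ hk]
  congr 1
  · rw [Function.update_self]
  · exact Finset.prod_congr rfl fun j hj => by
      rw [Function.update_of_ne (Finset.ne_of_mem_erase hj)]

lemma PiE_factor (N : ℕ) (e : ℕ → ℕ) {k : ℕ} (hk : k < N) :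
    PiE Q N e = (Q (2 ^ k)) ^ (e k) * PiE Q N (Function.update e k 0) := by
  rw [PiE_update N e (Finset.mem_range.mpr hk) 0, pow_zero, one_mul, PiE,
    ← Finset.mul_prod_erase _ _ (Finset.mem_range.mpr hk)]

lemma PiE_bump (N : ℕ) (e : ℕ → ℕ) {k : ℕ} (hk : k < N) :
    PiE Q N (Function.update e k (e k + 1)) = Q (2 ^ k) * PiE Q N e := by
  rw [PiE_update N e (Finset.mem_range.mpr hk) (e k + 1), pow_succ',
    PiE, ← Finset.mul_prod_erase _ _ (Finset.mem_range.mpr hk), mul_assoc]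

lemma sum_update_zero (N : ℕ) (e : ℕ → ℕ) {k : ℕ} (hk : k < N) :
    (∑ j ∈ Finset.range N, Function.update e k 0 j) + e k = ∑ j ∈ Finset.range N, e j := by
  rw [Finset.sum_update_of_mem (Finset.mem_range.mpr hk), zero_add,
    ← Finset.add_sum_erase _ _ (Finset.mem_range.mpr hk),
    Finset.sdiff_singleton_eq_erase]
  ring

lemma sum_bump (N : ℕ) (e : ℕ → ℕ) {k : ℕ} (hk : k < N) :
    ∑ j ∈ Finset.range N, Function.update e k (e k + 1) j
      = (∑ j ∈ Finset.range N, e j) + 1 := by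
  rw [Finset.sum_update_of_mem (Finset.mem_range.mpr hk),
    ← Finset.add_sum_erase _ _ (Finset.mem_range.mpr hk),
    Finset.sdiff_singleton_eq_erase]
  ring

end Comb

section Main
variable {γ : ℕ → ℝ} (hγ : ∀ s : ℕ, 0 < γ (s + 1) ∧ γ (s + 1) < 1 / 4)
    {μ : Measure ℝ} [IsProbabilityMeasure μ]
    (hμint : ∀ p : Polynomial ℝ, Integrable (fun x => p.eval x) μ)
    (hμpos : ∀ p : Polynomial ℝ, p ≠ 0 → 0 < ∫ x, (p.eval x) ^ 2 ∂μ)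
    (hμconv : ∀ p : Polynomial ℝ,
      Tendsto (fun s => nuInt γ s (fun x => p.eval x)) atTop (nhds (∫ x, p.eval x ∂μ)))
    {Q : ℕ → Polynomial ℝ} (hQmonic : ∀ n, (Q n).Monic) (hQdeg : ∀ n, (Q n).natDegree = n)
    (hQorth : ∀ n : ℕ, ∀ p : Polynomial ℝ, p.degree < (n : WithBot ℕ) →
      ∫ x, (Q n).eval x * p.eval x ∂μ = 0)

include hγ hμint hμpos hμconv hQmonic hQdeg hQorth in
lemma lemA : ∀ n N : ℕ, ∀ e : ℕ → ℕ, (∑ k ∈ Finset.range N, e k = n) → (∀ k, e k ≤ 2) →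
    (∀ k, N ≤ k → e k = 0) → ∀ s0 : ℕ, e s0 = 1 → (∀ k, k < s0 → e k = 0) →
    ∫ x, (PiE Q N e).eval x ∂μ = 0 := by
  intro n
  induction n using Nat.strong_induction_on with
  | _ n IH =>
    intro N e hsum hle hez s0 hs01 hs0z
    have hs0N : s0 < N := by
      by_contra h
      rw [hez s0 (le_of_not_gt h)] at hs01; exact absurd hs01 (by norm_num)
    obtain ⟨s, hsN, hsne, hmax⟩ : ∃ s, s < N ∧ e s ≠ 0 ∧ ∀ k, e k ≠ 0 → k ≤ s := by
      have hne : ((Finset.range N).filter (fun k => e k ≠ 0)).Nonempty :=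
        ⟨s0, Finset.mem_filter.mpr ⟨Finset.mem_range.mpr hs0N, by rw [hs01]; norm_num⟩⟩
      refine ⟨_, ?_, (Finset.mem_filter.mp (Finset.max'_mem _ hne)).2, ?_⟩
      · exact Finset.mem_range.mp (Finset.mem_filter.mp (Finset.max'_mem _ hne)).1
      · intro k hk
        by_cases hkN : k < N
        · exact Finset.le_max' _ k (Finset.mem_filter.mpr ⟨Finset.mem_range.mpr hkN, hk⟩)
        · exact absurd (hez k (le_of_not_gt hkN)) hk
    have hs0s : s0 ≤ s := hmax s0 (by rw [hs01]; norm_num)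
    have hsupp' : ∀ k, Function.update e s 0 k ≠ 0 → k < s := by
      intro k hk
      rcases eq_or_ne k s with h | h
      · rw [h, Function.update_self] at hk; exact absurd rfl hk
      · rw [Function.update_of_ne h] at hk
        exact lt_of_le_of_ne (hmax k hk) h
    have hle' : ∀ k, Function.update e s 0 k ≤ 2 := by
      intro k; rcases eq_or_ne k s with h | h
      · rw [h, Function.update_self]; norm_num
      · rw [Function.update_of_ne h]; exact hle k
    have hez' : ∀ k, N ≤ k → Function.update e s 0 k = 0 := by
      intro k hk
      rw [Function.update_of_ne (by omega : k ≠ s)]; exact hez k hk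
    have hsum' : (∑ k ∈ Finset.range N, Function.update e s 0 k) + e s = n := by
      rw [sum_update_zero N e hsN, hsum]
    rcases (by have := hle s; omega : e s = 1 ∨ e s = 2) with hes | hes
    · -- top exponent is 1
      by_cases hall : ∀ k, k < s → e k ≤ 1
      · -- no exponent 2 at all : direct orthogonality
        rw [PiE_factor N e hsN, hes, pow_one, mul_comm]
        refine key1 hQorth s _ (PiE_deg_lt1 hQmonic hQdeg N _ s hsupp' ?_)
        intro k; rcases eq_or_ne k s with h | h
        · rw [h, Function.update_self]; norm_num
        · rw [Function.update_of_ne h]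
          rcases lt_or_ge k s with h2 | h2
          · exact hall k h2
          · have h3 : e k = 0 := by
              by_contra hc
              exact (not_lt.mpr h2) (lt_of_le_of_ne (hmax k hc) h)
            rw [h3]
            norm_num
      · -- there is an exponent 2 below s
        push_neg at hall
        obtain ⟨K, hKs, hK2, hKmax⟩ : ∃ K, K < s ∧ e K = 2 ∧ ∀ k, K < k → k < s → e k ≤ 1 := by
          have hne2 : ((Finset.range s).filter (fun k => e k = 2)).Nonempty := by
            obtain ⟨k, hk1, hk2⟩ := hall
            exact ⟨k, Finset.mem_filter.mpr ⟨Finset.mem_range.mpr hk1, by have := hle k; omega⟩⟩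
          refine ⟨_, ?_, (Finset.mem_filter.mp (Finset.max'_mem _ hne2)).2, ?_⟩
          · exact Finset.mem_range.mp (Finset.mem_filter.mp (Finset.max'_mem _ hne2)).1
          · intro k hk1 hk2
            by_contra h
            have hk22 : e k = 2 := by have := hle k; omega
            have hmem : k ∈ (Finset.range s).filter (fun j => e j = 2) :=
              Finset.mem_filter.mpr ⟨Finset.mem_range.mpr hk2, hk22⟩
            have := Finset.le_max' _ k hmem
            omega
        have hs0K : s0 < K := by
          have h1 : e K ≠ 0 := by omega
          have h2 : ¬ K < s0 := fun h => h1 (hs0z K h)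
          have h3 : K ≠ s0 := by intro h; rw [h, hs01] at hK2; omega
          omega
        have hKN : K < N := by omega
        have hK1N : K + 1 < N := by omega
        -- polynomial identities
        have hfac : PiE Q N e = PiE Q N (Function.update e K 0) * (Q (2 ^ K)) ^ 2 := by
          rw [PiE_factor N e hKN, hK2, mul_comm]
        have he2K1 : Function.update e K 0 (K + 1) = e (K + 1) :=
          Function.update_of_ne (by omega) _ _
        have hbump : PiE Q N (Function.update (Function.update e K 0) (K + 1)
              (Function.update e K 0 (K + 1) + 1))
            = Q (2 ^ (K + 1)) * PiE Q N (Function.update e K 0) :=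
          PiE_bump N (Function.update e K 0) hK1N
        have hQQ := Q_sq hγ hμint hμpos hμconv hQmonic hQdeg hQorth K
        have hsplit : (fun x => (PiE Q N e).eval x)
            = fun x => (PiE Q N (Function.update (Function.update e K 0) (K + 1)
                (Function.update e K 0 (K + 1) + 1))).eval x
              + (r γ K ^ 2 / 4 - r γ (K + 1) / 2) * (PiE Q N (Function.update e K 0)).eval x := by
          funext x
          rw [hfac, hbump, hQQ]
          simp only [eval_mul, eval_add, eval_C, eval_pow]
          ring
        rw [hsplit, integral_add (hμint _) ((hμint _).const_mul _),
          MeasureTheory.integral_const_mul]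
        -- both integrals vanish by the induction hypothesis
        have hsum2 : (∑ k ∈ Finset.range N, Function.update e K 0 k) + 2 = n := by
          have := sum_update_zero N e hKN
          rw [hK2] at this
          omega
        have hle2 : ∀ k, Function.update e K 0 k ≤ 2 := by
          intro k; rcases eq_or_ne k K with h | h
          · rw [h, Function.update_self]; norm_num
          · rw [Function.update_of_ne h]; exact hle k
        have hez2 : ∀ k, N ≤ k → Function.update e K 0 k = 0 := fun k hk => by
          rw [Function.update_of_ne (by omega : k ≠ K)]; exact hez k hk
        have hs0e2 : Function.update e K 0 s0 = 1 := by
          rw [Function.update_of_ne (by omega : s0 ≠ K)]; exact hs01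
        have hs0ze2 : ∀ k, k < s0 → Function.update e K 0 k = 0 := fun k hk => by
          rw [Function.update_of_ne (by omega : k ≠ K)]; exact hs0z k hk
        have hI2 : ∫ x, (PiE Q N (Function.update e K 0)).eval x ∂μ = 0 :=
          IH (n - 2) (by omega) N (Function.update e K 0) (by omega) hle2 hez2 s0 hs0e2 hs0ze2
        have hle1 : ∀ k, Function.update (Function.update e K 0) (K + 1)
            (Function.update e K 0 (K + 1) + 1) k ≤ 2 := by
          intro k; rcases eq_or_ne k (K + 1) with h | h
          · rw [h, Function.update_self, he2K1]
            rcases eq_or_ne (K + 1) s with h2 | h2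
            · rw [h2]; omega
            · have := hKmax (K + 1) (by omega) (by omega)
              omega
          · rw [Function.update_of_ne h]; exact hle2 k
        have hez1 : ∀ k, N ≤ k → Function.update (Function.update e K 0) (K + 1)
            (Function.update e K 0 (K + 1) + 1) k = 0 := fun k hk => by
          rw [Function.update_of_ne (by omega : k ≠ K + 1)]; exact hez2 k hk
        have hs0e1 : Function.update (Function.update e K 0) (K + 1)
            (Function.update e K 0 (K + 1) + 1) s0 = 1 := by
          rw [Function.update_of_ne (by omega : s0 ≠ K + 1)]; exact hs0e2
        have hs0ze1 : ∀ k, k < s0 → Function.update (Function.update e K 0) (K + 1)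
            (Function.update e K 0 (K + 1) + 1) k = 0 := fun k hk => by
          rw [Function.update_of_ne (by omega : k ≠ K + 1)]; exact hs0ze2 k hk
        have hsum1 : ∑ k ∈ Finset.range N, Function.update (Function.update e K 0) (K + 1)
            (Function.update e K 0 (K + 1) + 1) k = n - 1 := by
          rw [sum_bump N (Function.update e K 0) hK1N]; omega
        have hI1 : ∫ x, (PiE Q N (Function.update (Function.update e K 0) (K + 1)
            (Function.update e K 0 (K + 1) + 1))).eval x ∂μ = 0 :=
          IH (n - 1) (by omega) N (Function.update (Function.update e K 0) (K + 1)
            (Function.update e K 0 (K + 1) + 1)) hsum1 hle1 hez1 s0 hs0e1 hs0ze1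
        rw [hI1, hI2, mul_zero, add_zero]
    · -- top exponent is 2
      rw [PiE_factor N e hsN, hes, mul_comm]
      rw [key2 hγ hμint hμpos hμconv hQmonic hQdeg hQorth s (PiE Q N (Function.update e s 0))
        (PiE_deg_lt2 hQmonic hQdeg N _ s hsupp' hle')]
      have hI : ∫ x, (PiE Q N (Function.update e s 0)).eval x ∂μ = 0 := by
        have hs0nes : s0 ≠ s := by intro h; rw [h, hes] at hs01; omega
        refine IH (n - 2) (by omega) N (Function.update e s 0) (by omega) hle' hez' s0 ?_ ?_
        · rw [Function.update_of_ne hs0nes]; exact hs01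
        · intro k hk; rcases eq_or_ne k s with h | h
          · rw [h, Function.update_self]
          · rw [Function.update_of_ne h]; exact hs0z k hk
      rw [hI, mul_zero]

include hγ hμint hμpos hμconv hQmonic hQdeg hQorth in
lemma lemB : ∀ n N : ℕ, ∀ e : ℕ → ℕ, (∑ k ∈ Finset.range N, e k = n) →
    (∀ k, e k = 0 ∨ e k = 2) → (∀ k, N ≤ k → e k = 0) →
    ∫ x, (PiE Q N e).eval x ∂μ
      = ∏ k ∈ Finset.range N, (if e k = 2 then ∫ x, ((Q (2 ^ k)).eval x) ^ 2 ∂μ else 1) := by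
  intro n
  induction n using Nat.strong_induction_on with
  | _ n IH =>
    intro N e hsum hor hez
    rcases Nat.eq_zero_or_pos n with hn | hn
    · -- all exponents vanish
      have hz : ∀ k ∈ Finset.range N, e k = 0 := by
        rw [hn] at hsum
        exact (Finset.sum_eq_zero_iff).mp hsum
      have h1 : PiE Q N e = 1 := by
        rw [PiE]
        exact Finset.prod_eq_one fun k hk => by rw [hz k hk, pow_zero]
      have h2 : ∀ k ∈ Finset.range N,
          (if e k = 2 then ∫ x, ((Q (2 ^ k)).eval x) ^ 2 ∂μ else 1) = 1 := by
        intro k hk; rw [hz k hk]; norm_num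
      rw [h1, Finset.prod_eq_one h2]
      simp
    · -- there is a maximal support element, with exponent 2
      have hnonzero : ∃ k, k < N ∧ e k ≠ 0 := by
        by_contra h
        push_neg at h
        have : ∑ k ∈ Finset.range N, e k = 0 :=
          Finset.sum_eq_zero fun k hk => h k (Finset.mem_range.mp hk)
        omega
      obtain ⟨s, hsN, hsne, hmax⟩ : ∃ s, s < N ∧ e s ≠ 0 ∧ ∀ k, e k ≠ 0 → k ≤ s := by
        obtain ⟨k0, hk0N, hk0⟩ := hnonzero
        have hne : ((Finset.range N).filter (fun k => e k ≠ 0)).Nonempty :=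
          ⟨k0, Finset.mem_filter.mpr ⟨Finset.mem_range.mpr hk0N, hk0⟩⟩
        refine ⟨_, ?_, (Finset.mem_filter.mp (Finset.max'_mem _ hne)).2, ?_⟩
        · exact Finset.mem_range.mp (Finset.mem_filter.mp (Finset.max'_mem _ hne)).1
        · intro k hk
          by_cases hkN : k < N
          · exact Finset.le_max' _ k (Finset.mem_filter.mpr ⟨Finset.mem_range.mpr hkN, hk⟩)
          · exact absurd (hez k (le_of_not_gt hkN)) hk
      have hes : e s = 2 := by rcases hor s with h | h; exact absurd h hsne; exact h
      have hsupp' : ∀ k, Function.update e s 0 k ≠ 0 → k < s := by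
        intro k hk
        rcases eq_or_ne k s with h | h
        · rw [h, Function.update_self] at hk; exact absurd rfl hk
        · rw [Function.update_of_ne h] at hk
          exact lt_of_le_of_ne (hmax k hk) h
      have hle' : ∀ k, Function.update e s 0 k ≤ 2 := by
        intro k; rcases eq_or_ne k s with h | h
        · rw [h, Function.update_self]; norm_num
        · rw [Function.update_of_ne h]; rcases hor k with h2 | h2 <;> omega
      have hor' : ∀ k, Function.update e s 0 k = 0 ∨ Function.update e s 0 k = 2 := by
        intro k; rcases eq_or_ne k s with h | h
        · rw [h, Function.update_self]; left; rfl
        · rw [Function.update_of_ne h]; exact hor k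
      have hez' : ∀ k, N ≤ k → Function.update e s 0 k = 0 := fun k hk => by
        rw [Function.update_of_ne (by omega : k ≠ s)]; exact hez k hk
      have hsum' : (∑ k ∈ Finset.range N, Function.update e s 0 k) + 2 = n := by
        have := sum_update_zero N e hsN
        rw [hes] at this
        omega
      rw [PiE_factor N e hsN, hes, mul_comm]
      rw [key2 hγ hμint hμpos hμconv hQmonic hQdeg hQorth s (PiE Q N (Function.update e s 0))
        (PiE_deg_lt2 hQmonic hQdeg N _ s hsupp' hle')]
      rw [IH (n - 2) (by omega) N (Function.update e s 0) (by omega) hor' hez']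
      -- match the right-hand side products
      rw [← Finset.mul_prod_erase _
        (fun k => if e k = 2 then ∫ x, ((Q (2 ^ k)).eval x) ^ 2 ∂μ else 1)
        (Finset.mem_range.mpr hsN), if_pos hes]
      congr 1
      rw [← Finset.prod_erase _ ?_]
      · exact Finset.prod_congr rfl fun k hk => by
          rw [Function.update_of_ne (Finset.ne_of_mem_erase hk)]
      · rw [Function.update_self]; norm_num

end Main


section Assemble
variable {Q : ℕ → Polynomial ℝ}

lemma bit_low (k s : ℕ) : ∀ t, t < s → ((2 * k + 1) * 2 ^ s).testBit t = false := by
  intro t ht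
  rw [Nat.testBit_mul_two_pow]
  simp [Nat.not_le.mpr ht]

lemma bit_self (k s : ℕ) : ((2 * k + 1) * 2 ^ s).testBit s = true := by
  rw [Nat.testBit_mul_two_pow]
  simp [Nat.mul_add_mod]

lemma bit_high (a t : ℕ) (h : a ≤ t) : a.testBit t = false :=
  Nat.testBit_lt_two_pow (lt_of_lt_of_le (Nat.lt_two_pow_self (n := a)) (Nat.pow_le_pow_right (by norm_num) h))

lemma Bpoly_eq_PiE (n : ℕ) :
    Bpoly Q n = PiE Q n (fun t => if n.testBit t then 1 else 0) := by
  rw [Bpoly, PiE]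
  refine Finset.prod_congr rfl fun t _ => ?_
  by_cases h : n.testBit t <;> simp [h]

lemma PiE_extend (M N : ℕ) (e : ℕ → ℕ) (hNM : N ≤ M) (hez : ∀ t, N ≤ t → e t = 0) :
    PiE Q N e = PiE Q M e := by
  rw [PiE, PiE]
  refine Finset.prod_subset (Finset.range_subset_range.mpr hNM) fun t _ ht => ?_
  rw [hez t (le_of_not_gt (fun h => ht (Finset.mem_range.mpr h))), pow_zero]

lemma PiE_mul (N : ℕ) (e1 e2 : ℕ → ℕ) :
    PiE Q N e1 * PiE Q N e2 = PiE Q N (fun t => e1 t + e2 t) := by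
  rw [PiE, PiE, PiE, ← Finset.prod_mul_distrib]
  exact Finset.prod_congr rfl fun t _ => (pow_add _ _ _).symm

end Assemble

theorem stmt_12 (γ : ℕ → ℝ) (hγ : ∀ s : ℕ, 0 < γ (s + 1) ∧ γ (s + 1) < 1 / 4)
    (μ : Measure ℝ) [IsProbabilityMeasure μ]
    (hμint : ∀ p : Polynomial ℝ, Integrable (fun x => p.eval x) μ)
    (hμpos : ∀ p : Polynomial ℝ, p ≠ 0 → 0 < ∫ x, (p.eval x) ^ 2 ∂μ)
    (hμconv : ∀ p : Polynomial ℝ,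
      Tendsto (fun s => nuInt γ s (fun x => p.eval x)) atTop (nhds (∫ x, p.eval x ∂μ)))
    (Q : ℕ → Polynomial ℝ) (hQmonic : ∀ n, (Q n).Monic) (hQdeg : ∀ n, (Q n).natDegree = n)
    (hQorth : ∀ n : ℕ, ∀ p : Polynomial ℝ, p.degree < (n : WithBot ℕ) →
      ∫ x, (Q n).eval x * p.eval x ∂μ = 0)
 :
    (∀ j k m s : ℕ, s ≠ m →
      ∫ x, (Bpoly Q ((2 * k + 1) * 2 ^ s)).eval x * (Bpoly Q ((2 * j + 1) * 2 ^ m)).eval x ∂μ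
        = 0) ∧
    (∀ n : ℕ, 1 ≤ n →
      ∫ x, ((Bpoly Q n).eval x) ^ 2 ∂μ =
        ∏ k ∈ Finset.range n,
          if Nat.testBit n k then ∫ x, ((Q (2 ^ k)).eval x) ^ 2 ∂μ else 1) := by
  constructor
  · -- part (i)
    intro j k m s hsm
    set a := (2 * k + 1) * 2 ^ s with ha
    set b := (2 * j + 1) * 2 ^ m with hb
    have ha1 : 1 ≤ a := Nat.one_le_iff_ne_zero.mpr (by positivity)
    have hb1 : 1 ≤ b := Nat.one_le_iff_ne_zero.mpr (by positivity)
    set N := a + b with hN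
    set ea : ℕ → ℕ := fun t => if a.testBit t then 1 else 0 with hea
    set eb : ℕ → ℕ := fun t => if b.testBit t then 1 else 0 with heb
    have heza : ∀ t, a ≤ t → ea t = 0 := fun t ht => by
      simp only [hea, bit_high a t ht]; rfl
    have hezb : ∀ t, b ≤ t → eb t = 0 := fun t ht => by
      simp only [heb, bit_high b t ht]; rfl
    have hBa : Bpoly Q a = PiE Q N ea :=
      (Bpoly_eq_PiE a).trans (PiE_extend N a ea (by omega) heza)
    have hBb : Bpoly Q b = PiE Q N eb :=
      (Bpoly_eq_PiE b).trans (PiE_extend N b eb (by omega) hezb)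
    have hint : (fun x => (Bpoly Q a).eval x * (Bpoly Q b).eval x)
        = fun x => (PiE Q N (fun t => ea t + eb t)).eval x := by
      funext x
      rw [hBa, hBb, ← PiE_mul, eval_mul]
    rw [hint]
    -- apply lemA
    set s0 := min s m with hs0
    have hkey : ea s0 + eb s0 = 1 ∧ (∀ t, t < s0 → ea t + eb t = 0) := by
      rcases lt_or_gt_of_ne hsm with h | h
      · have h1 : s0 = s := min_eq_left h.le
        constructor
        · rw [h1, hea, heb]
          simp only [ha, hb, bit_self k s, bit_low j m s h]
          rfl
        · intro t ht
          rw [h1] at ht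
          rw [hea, heb]
          simp only [ha, hb, bit_low k s t ht, bit_low j m t (by omega)]
          rfl
      · have h1 : s0 = m := min_eq_right h.le
        constructor
        · rw [h1, hea, heb]
          simp only [ha, hb, bit_self j m, bit_low k s m h]
          rfl
        · intro t ht
          rw [h1] at ht
          rw [hea, heb]
          simp only [ha, hb, bit_low j m t ht, bit_low k s t (by omega)]
          rfl
    refine lemA hγ hμint hμpos hμconv hQmonic hQdeg hQorth
      (∑ t ∈ Finset.range N, (ea t + eb t)) N (fun t => ea t + eb t) rfl ?_ ?_ s0 hkey.1 hkey.2
    · intro t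
      rw [hea, heb]
      by_cases h1 : a.testBit t <;> by_cases h2 : b.testBit t <;> simp [h1, h2]
    · intro t ht
      show ea t + eb t = 0
      rw [heza t (by omega), hezb t (by omega)]
  · -- part (ii)
    intro n hn
    have hsq : (fun x => ((Bpoly Q n).eval x) ^ 2)
        = fun x => (PiE Q n (fun t => if n.testBit t then 2 else 0)).eval x := by
      funext x
      rw [← eval_pow]
      congr 1
      rw [Bpoly, PiE, ← Finset.prod_pow]
      refine Finset.prod_congr rfl fun t _ => ?_
      by_cases h : n.testBit t <;> simp [h]
    rw [hsq]
    rw [lemB hγ hμint hμpos hμconv hQmonic hQdeg hQorth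
      (∑ t ∈ Finset.range n, (if n.testBit t then 2 else 0)) n _ rfl ?_ ?_]
    · refine Finset.prod_congr rfl fun t _ => ?_
      by_cases h : n.testBit t <;> simp [h]
    · intro t
      by_cases h : n.testBit t <;> simp [h]
    · intro t ht
      rw [bit_high n t ht]
      rfl
end

section
/- Let n ∈ ℕ be written as n = 2^s(2k+1) with s, k ≥ 0. Then there exist unique real numbers a_0, a_1, …, a_{k−1} such that Q_n = a_0 B_{2^s} + a_1 B_{3·2^s} + … + a_{k−1} B_{(2k−1)·2^s} + B_{(2k+1)·2^s}; that is, Q_n has a unique representation as a linear combination of B_{2^s}, B_{3·2^s}, …, B_{(2k+1)·2^s} in which the coefficient of B_{(2k+1)·2^s} is 1. -/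
open Polynomial MeasureTheory Filter

/- ## Nat auxiliary lemmas -/

lemma sum_testBit_aux (N : ℕ) : ∀ m : ℕ, m < 2 ^ N →
    (∑ k ∈ Finset.range N, (if m.testBit k then 2 ^ k else 0)) = m := by
  induction N with
  | zero => intro m hm; interval_cases m; simp
  | succ N ih =>
    intro m hm
    rw [Finset.sum_range_succ']
    have h1 : ∀ k, m.testBit (k + 1) = (m / 2).testBit k := fun k => Nat.testBit_add_one m k
    have h2 : (∑ k ∈ Finset.range N, (if m.testBit (k+1) then 2 ^ (k+1) else 0))
        = 2 * ∑ k ∈ Finset.range N, (if (m / 2).testBit k then 2 ^ k else 0) := by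
      rw [Finset.mul_sum]
      refine Finset.sum_congr rfl fun k _ => ?_
      rw [h1]; split <;> ring
    have h3 : m / 2 < 2 ^ N := by omega
    rw [h2, ih _ h3]
    have h4 : m.testBit 0 = decide (m % 2 = 1) := Nat.testBit_zero m
    rcases Nat.even_or_odd m with he | ho
    · have : m % 2 = 0 := Nat.even_iff.mp he
      rw [h4]; simp [this]; omega
    · have : m % 2 = 1 := Nat.odd_iff.mp ho
      rw [h4]; simp [this]; omega

lemma sum_range_two_pow (N : ℕ) : (∑ k ∈ Finset.range N, 2 ^ k) = 2 ^ N - 1 := by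
  induction N with
  | zero => simp
  | succ N ih => rw [Finset.sum_range_succ, ih]; have := Nat.one_le_two_pow (n := N); omega

lemma odd_part_exists : ∀ m : ℕ, 0 < m → ∃ v j : ℕ, m = 2 ^ v * (2 * j + 1) := by
  intro m
  induction m using Nat.strong_induction_on with
  | _ m ih =>
    intro hm
    rcases Nat.even_or_odd m with he | ho
    · obtain ⟨m', rfl⟩ := he
      have h2 : m' + m' = 2 * m' := by ring
      obtain ⟨v, j, hvj⟩ := ih m' (by omega) (by omega)
      exact ⟨v + 1, j, by rw [h2, hvj]; ring⟩
    · obtain ⟨j, rfl⟩ := ho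
      exact ⟨0, j, by ring⟩

/- ## Basic facts about r and P -/

section Part1

variable {γ : ℕ → ℝ} (hγ : ∀ s : ℕ, 0 < γ (s + 1) ∧ γ (s + 1) < 1 / 4)

include hγ in
lemma r_pos_s13 : ∀ t, 0 < r γ t := by
  intro t
  induction t with
  | zero => norm_num [r]
  | succ t ih => exact mul_pos (hγ t).1 (pow_pos ih 2)

include hγ in
lemma r_succ_le : ∀ t, r γ (t + 1) ≤ (r γ t) ^ 2 / 4 := by
  intro t
  have h1 := (hγ t).2
  have h2 : (0:ℝ) < (r γ t) ^ 2 := pow_pos (r_pos_s13 hγ t) 2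
  show γ (t + 1) * (r γ t) ^ 2 ≤ _
  nlinarith

lemma P_monic_s13 (γ : ℕ → ℝ) : ∀ t, (P γ t).Monic ∧ (P γ t).natDegree = 2 ^ t := by
  intro t
  induction t with
  | zero =>
    constructor
    · show (X - 1 : Polynomial ℝ).Monic
      simpa using monic_X_sub_C (1:ℝ)
    · show (X - 1 : Polynomial ℝ).natDegree = 1
      simpa using natDegree_X_sub_C (1:ℝ)
  | succ t ih =>
    have hm : (P γ t + C (r γ t)).Monic := by
      apply ih.1.add_of_left
      rw [degree_eq_natDegree ih.1.ne_zero, ih.2]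
      calc degree (C (r γ t)) ≤ 0 := degree_C_le
        _ < ((2 ^ t : ℕ) : WithBot ℕ) := by
          exact_mod_cast pow_pos (by norm_num : (0:ℕ) < 2) t

    constructor
    · exact ih.1.mul hm
    · show (P γ t * (P γ t + C (r γ t))).natDegree = 2 ^ (t+1)
      rw [ih.1.natDegree_mul hm, ih.2]
      have : (P γ t + C (r γ t)).natDegree = 2 ^ t := by
        rw [natDegree_add_C, ih.2]
      rw [this]; ring

include hγ in
/-- Quadratic factorization of `P γ (t+1) - C y` through level `t`. -/
lemma P_factor (t : ℕ) (y : ℝ) (h1 : -(r γ (t+1)) ≤ y) (h2 : y ≤ 0) :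
    ∃ y1 y2 : ℝ, y1 + y2 = -(r γ t) ∧ -(r γ t) ≤ y1 ∧ y1 ≤ 0 ∧ -(r γ t) ≤ y2 ∧ y2 ≤ 0 ∧
      P γ (t+1) - C y = (P γ t - C y1) * (P γ t - C y2) := by
  set rt := r γ t with hrt
  have hrtpos : 0 < rt := r_pos_s13 hγ t
  have hD : 0 ≤ rt ^ 2 + 4 * y := by
    have := r_succ_le hγ t
    nlinarith
  set D := rt ^ 2 + 4 * y with hDdef
  have hsq : Real.sqrt D ^ 2 = D := Real.sq_sqrt hD
  have hsnn : 0 ≤ Real.sqrt D := Real.sqrt_nonneg D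
  have hsle : Real.sqrt D ≤ rt := by
    nlinarith [hsq, hsnn]
  refine ⟨(-rt + Real.sqrt D) / 2, (-rt - Real.sqrt D) / 2, by ring, by linarith, by linarith,
    by linarith, by linarith, ?_⟩
  have hmul : ((-rt + Real.sqrt D) / 2) * ((-rt - Real.sqrt D) / 2) = -y := by
    have : ((-rt + Real.sqrt D) / 2) * ((-rt - Real.sqrt D) / 2)
        = (rt ^ 2 - Real.sqrt D ^ 2) / 4 := by ring
    rw [this, hsq]; rw [hDdef]; ring
  have hPs : P γ (t+1) = P γ t * (P γ t + C rt) := rfl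
  rw [hPs]
  have hC1 : C y = -(C ((-rt + Real.sqrt D) / 2) * C ((-rt - Real.sqrt D) / 2)) := by
    rw [← C_mul, ← C_neg]; congr 1; rw [hmul]; ring
  have hC2 : C rt = -(C ((-rt + Real.sqrt D) / 2) + C ((-rt - Real.sqrt D) / 2)) := by
    rw [← C_add, ← C_neg]; congr 1; ring
  rw [hC1, hC2]; ring

include hγ in
/-- Sum of a polynomial of degree `< 2^t` over the roots of `P γ t - C y` is independent
of `y` for `y ∈ [-r_t, 0]`. -/
lemma sum_roots_indep (t : ℕ) : ∀ p : Polynomial ℝ, p.natDegree < 2 ^ t →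
    ∃ c : ℝ, ∀ y : ℝ, -(r γ t) ≤ y → y ≤ 0 →
      (((P γ t - C y).roots.map fun x => p.eval x).sum) = c := by
  induction t with
  | zero =>
    intro p hp
    have h0 : p.natDegree = 0 := by simpa [Nat.lt_one_iff] using hp
    obtain ⟨a, rfl⟩ := Polynomial.natDegree_eq_zero.mp h0
    refine ⟨a, fun y _ _ => ?_⟩
    have : P γ 0 - C y = X - C (1 + y) := by
      show X - 1 - C y = _
      rw [C_add]; simp; ring
    rw [this, roots_X_sub_C]
    simp
  | succ t ih =>
    intro p hp
    have hmon := (P_monic_s13 γ t).1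
    have hdeg := (P_monic_s13 γ t).2
    set A := p /ₘ (P γ t) with hA
    set B := p %ₘ (P γ t) with hB
    have hpAB : P γ t * A + B = p := by
      rw [hA, hB, add_comm]; exact modByMonic_add_div p (P γ t)
    have hdA : A.natDegree < 2 ^ t := by
      have h1 : (p /ₘ P γ t).natDegree = p.natDegree - (P γ t).natDegree :=
        natDegree_divByMonic p hmon
      rw [hdeg] at h1
      have h2 : 2 ^ (t+1) = 2 * 2 ^ t := by ring
      have h3 : (0:ℕ) < 2 ^ t := pow_pos (by norm_num : (0:ℕ) < 2) t
      rw [hA, h1]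
      omega
    have hdB : B.natDegree < 2 ^ t := by
      by_cases hB0 : B = 0
      · rw [hB0]; simpa using pow_pos (by norm_num : (0:ℕ) < 2) t
      · have := degree_modByMonic_lt p hmon
        rw [← hB] at this
        rw [degree_eq_natDegree hB0, degree_eq_natDegree hmon.ne_zero, hdeg] at this
        exact_mod_cast this
    obtain ⟨cA, hcA⟩ := ih A hdA
    obtain ⟨cB, hcB⟩ := ih B hdB
    refine ⟨-(r γ t) * cA + 2 * cB, fun y hy1 hy2 => ?_⟩
    obtain ⟨y1, y2, hsum, hy11, hy12, hy21, hy22, hfac⟩ := P_factor hγ t y hy1 hy2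
    have hdC : ∀ a : ℝ, (C a).degree < (P γ t).degree := by
      intro a
      rw [degree_eq_natDegree hmon.ne_zero, hdeg]
      refine lt_of_le_of_lt degree_C_le ?_
      exact_mod_cast pow_pos (by norm_num : (0:ℕ) < 2) t
    rw [hfac, roots_mul (mul_ne_zero (hmon.sub_of_left (hdC y1)).ne_zero
        (hmon.sub_of_left (hdC y2)).ne_zero)]
    rw [Multiset.map_add, Multiset.sum_add]
    have key : ∀ yi : ℝ, -(r γ t) ≤ yi → yi ≤ 0 →
        (((P γ t - C yi).roots.map fun x => p.eval x).sum) = yi * cA + cB := by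
      intro yi hyi1 hyi2
      have hroots : ∀ x ∈ (P γ t - C yi).roots, (P γ t).eval x = yi := by
        intro x hx
        have := isRoot_of_mem_roots hx
        simp only [IsRoot, eval_sub, eval_C, sub_eq_zero] at this
        exact this
      have : (((P γ t - C yi).roots.map fun x => p.eval x).sum)
          = (((P γ t - C yi).roots.map fun x => yi * A.eval x + B.eval x).sum) := by
        congr 1
        apply Multiset.map_congr rfl
        intro x hx
        rw [← hpAB]
        simp [hroots x hx]
      rw [this]
      have hsplit : (((P γ t - C yi).roots.map fun x => yi * A.eval x + B.eval x).sum)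
          = yi * (((P γ t - C yi).roots.map fun x => A.eval x).sum)
            + (((P γ t - C yi).roots.map fun x => B.eval x).sum) := by
        rw [Multiset.sum_map_add, Multiset.sum_map_mul_left]
      rw [hsplit, hcA yi hyi1 hyi2, hcB yi hyi1 hyi2]
    rw [key y1 hy11 hy12, key y2 hy21 hy22]
    linear_combination cA * hsum

end Part1

section Part1b

variable {γ : ℕ → ℝ} (hγ : ∀ s : ℕ, 0 < γ (s + 1) ∧ γ (s + 1) < 1 / 4)

include hγ in
/-- Sum of `(P_t + r_t/2) · p` over the roots of `P γ u - C y` vanishes for `u > t`. -/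
lemma sum_roots_zero (t : ℕ) (p : Polynomial ℝ) (hp : p.natDegree < 2 ^ t) :
    ∀ u, t + 1 ≤ u → ∀ y : ℝ, -(r γ u) ≤ y → y ≤ 0 →
      (((P γ u - C y).roots.map fun x =>
        ((P γ t + C (r γ t / 2)) * p).eval x).sum) = 0 := by
  intro u hu
  induction u, hu using Nat.le_induction with
  | base =>
    intro y hy1 hy2
    obtain ⟨c, hc⟩ := sum_roots_indep hγ t p hp
    obtain ⟨y1, y2, hsum, hy11, hy12, hy21, hy22, hfac⟩ := P_factor hγ t y hy1 hy2
    have hmon := (P_monic_s13 γ t).1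
    have hdeg := (P_monic_s13 γ t).2
    have hdC : ∀ a : ℝ, (C a).degree < (P γ t).degree := by
      intro a
      rw [degree_eq_natDegree hmon.ne_zero, hdeg]
      refine lt_of_le_of_lt degree_C_le ?_
      exact_mod_cast pow_pos (by norm_num : (0:ℕ) < 2) t
    rw [hfac, roots_mul (mul_ne_zero (hmon.sub_of_left (hdC y1)).ne_zero
        (hmon.sub_of_left (hdC y2)).ne_zero), Multiset.map_add, Multiset.sum_add]
    have key : ∀ yi : ℝ, -(r γ t) ≤ yi → yi ≤ 0 →
        (((P γ t - C yi).roots.map fun x =>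
          ((P γ t + C (r γ t / 2)) * p).eval x).sum) = (yi + r γ t / 2) * c := by
      intro yi hyi1 hyi2
      have hroots : ∀ x ∈ (P γ t - C yi).roots, (P γ t).eval x = yi := by
        intro x hx
        have := isRoot_of_mem_roots hx
        simp only [IsRoot, eval_sub, eval_C, sub_eq_zero] at this
        exact this
      have hcong : (((P γ t - C yi).roots.map fun x =>
            ((P γ t + C (r γ t / 2)) * p).eval x).sum)
          = (((P γ t - C yi).roots.map fun x =>
            (yi + r γ t / 2) * p.eval x).sum) := by
        congr 1
        apply Multiset.map_congr rfl
        intro x hx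
        simp [hroots x hx]
      rw [hcong, Multiset.sum_map_mul_left, hc yi hyi1 hyi2]
    rw [key y1 hy11 hy12, key y2 hy21 hy22]
    linear_combination c * hsum
  | succ u hu ihu =>
    intro y hy1 hy2
    obtain ⟨y1, y2, hsum, hy11, hy12, hy21, hy22, hfac⟩ := P_factor hγ u y hy1 hy2
    have hmon := (P_monic_s13 γ u).1
    have hdeg := (P_monic_s13 γ u).2
    have hdC : ∀ a : ℝ, (C a).degree < (P γ u).degree := by
      intro a
      rw [degree_eq_natDegree hmon.ne_zero, hdeg]
      refine lt_of_le_of_lt degree_C_le ?_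
      exact_mod_cast pow_pos (by norm_num : (0:ℕ) < 2) u
    rw [hfac, roots_mul (mul_ne_zero (hmon.sub_of_left (hdC y1)).ne_zero
        (hmon.sub_of_left (hdC y2)).ne_zero), Multiset.map_add, Multiset.sum_add,
      ihu y1 hy11 hy12, ihu y2 hy21 hy22]
    ring

end Part1b

section Part1c

variable {γ : ℕ → ℝ} (hγ : ∀ s : ℕ, 0 < γ (s + 1) ∧ γ (s + 1) < 1 / 4)

include hγ in
lemma nuInt_q_zero (t u : ℕ) (hu : t + 1 ≤ u) (p : Polynomial ℝ) (hp : p.natDegree < 2 ^ t) :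
    nuInt γ u (fun x => ((P γ t + C (r γ t / 2)) * p).eval x) = 0 := by
  unfold nuInt
  have h1 : P γ u + C (r γ u / 2) = P γ u - C (-(r γ u / 2)) := by
    rw [C_neg, sub_neg_eq_add]
  have h2 := sum_roots_zero hγ t p hp u hu (-(r γ u / 2))
    (by have := r_pos_s13 hγ u; linarith) (by have := r_pos_s13 hγ u; linarith)
  rw [h1, h2, zero_div]

include hγ in
lemma q_orth (μ : Measure ℝ)
    (hμconv : ∀ p : Polynomial ℝ,
      Tendsto (fun s => nuInt γ s (fun x => p.eval x)) atTop (nhds (∫ x, p.eval x ∂μ)))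
    (t : ℕ) (p : Polynomial ℝ) (hp : p.degree < ((2 ^ t : ℕ) : WithBot ℕ)) :
    ∫ x, (P γ t + C (r γ t / 2)).eval x * p.eval x ∂μ = 0 := by
  have hpnat : p.natDegree < 2 ^ t := by
    by_cases hp0 : p = 0
    · rw [hp0]; simpa using pow_pos (by norm_num : (0:ℕ) < 2) t
    · exact (natDegree_lt_iff_degree_lt hp0).mpr hp
  have hconv := hμconv ((P γ t + C (r γ t / 2)) * p)
  have hev : (fun u => nuInt γ u (fun x => ((P γ t + C (r γ t / 2)) * p).eval x))
      =ᶠ[atTop] (fun _ => (0:ℝ)) :=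
    Filter.eventually_atTop.mpr ⟨t + 1, fun u hu => nuInt_q_zero hγ t u hu p hpnat⟩
  have h0 : Tendsto (fun u => nuInt γ u (fun x => ((P γ t + C (r γ t / 2)) * p).eval x))
      atTop (nhds 0) := Tendsto.congr' hev.symm tendsto_const_nhds
  have := tendsto_nhds_unique hconv h0
  simpa [eval_mul] using this

include hγ in
lemma Q_eq_s13 (μ : Measure ℝ)
    (hμint : ∀ p : Polynomial ℝ, Integrable (fun x => p.eval x) μ)
    (hμpos : ∀ p : Polynomial ℝ, p ≠ 0 → 0 < ∫ x, (p.eval x) ^ 2 ∂μ)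
    (hμconv : ∀ p : Polynomial ℝ,
      Tendsto (fun s => nuInt γ s (fun x => p.eval x)) atTop (nhds (∫ x, p.eval x ∂μ)))
    (Q : ℕ → Polynomial ℝ) (hQmonic : ∀ n, (Q n).Monic) (hQdeg : ∀ n, (Q n).natDegree = n)
    (hQorth : ∀ n : ℕ, ∀ p : Polynomial ℝ, p.degree < (n : WithBot ℕ) →
      ∫ x, (Q n).eval x * p.eval x ∂μ = 0)
    (t : ℕ) : Q (2 ^ t) = P γ t + C (r γ t / 2) := by
  set q : Polynomial ℝ := P γ t + C (r γ t / 2) with hq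
  have hqmon : q.Monic := by
    apply (P_monic_s13 γ t).1.add_of_left
    rw [degree_eq_natDegree (P_monic_s13 γ t).1.ne_zero, (P_monic_s13 γ t).2]
    refine lt_of_le_of_lt degree_C_le ?_
    exact_mod_cast pow_pos (by norm_num : (0:ℕ) < 2) t
  have hqdeg : q.natDegree = 2 ^ t := by
    rw [hq, natDegree_add_C, (P_monic_s13 γ t).2]
  by_contra hne
  set d : Polynomial ℝ := Q (2 ^ t) - q with hd
  have hd0 : d ≠ 0 := sub_ne_zero.mpr hne
  have hddeg : d.degree < ((2 ^ t : ℕ) : WithBot ℕ) := by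
    have h1 : (Q (2 ^ t)).degree = q.degree := by
      rw [degree_eq_natDegree (hQmonic _).ne_zero, degree_eq_natDegree hqmon.ne_zero,
        hQdeg, hqdeg]
    have h2 := degree_sub_lt h1 (hQmonic _).ne_zero (by rw [(hQmonic _).leadingCoeff, hqmon.leadingCoeff])
    rwa [degree_eq_natDegree (hQmonic _).ne_zero, hQdeg] at h2
  have hint : ∀ a b : Polynomial ℝ, Integrable (fun x => a.eval x * b.eval x) μ := by
    intro a b; simpa [eval_mul] using hμint (a * b)
  have h1 : ∫ x, (Q (2 ^ t)).eval x * d.eval x ∂μ = 0 := hQorth (2 ^ t) d hddeg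
  have h2 : ∫ x, q.eval x * d.eval x ∂μ = 0 := q_orth hγ μ hμconv t d hddeg
  have h3 : ∫ x, (d.eval x) ^ 2 ∂μ = 0 := by
    have : (fun x => (d.eval x) ^ 2)
        = fun x => (Q (2 ^ t)).eval x * d.eval x - q.eval x * d.eval x := by
      funext x
      rw [hd]; simp [eval_sub]; ring
    rw [this, integral_sub (hint _ _) (hint _ _), h1, h2, sub_zero]
  exact absurd h3 (ne_of_gt (hμpos d hd0))

include hγ in
lemma Q_sq_s13 (μ : Measure ℝ)
    (hμint : ∀ p : Polynomial ℝ, Integrable (fun x => p.eval x) μ)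
    (hμpos : ∀ p : Polynomial ℝ, p ≠ 0 → 0 < ∫ x, (p.eval x) ^ 2 ∂μ)
    (hμconv : ∀ p : Polynomial ℝ,
      Tendsto (fun s => nuInt γ s (fun x => p.eval x)) atTop (nhds (∫ x, p.eval x ∂μ)))
    (Q : ℕ → Polynomial ℝ) (hQmonic : ∀ n, (Q n).Monic) (hQdeg : ∀ n, (Q n).natDegree = n)
    (hQorth : ∀ n : ℕ, ∀ p : Polynomial ℝ, p.degree < (n : WithBot ℕ) →
      ∫ x, (Q n).eval x * p.eval x ∂μ = 0)
    (t : ℕ) : (Q (2 ^ t)) ^ 2 = Q (2 ^ (t + 1)) + C ((r γ t) ^ 2 / 4 - r γ (t + 1) / 2) := by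
  rw [Q_eq_s13 hγ μ hμint hμpos hμconv Q hQmonic hQdeg hQorth t,
    Q_eq_s13 hγ μ hμint hμpos hμconv Q hQmonic hQdeg hQorth (t + 1)]
  have hPs : P γ (t+1) = P γ t * (P γ t + C (r γ t)) := rfl
  rw [hPs]
  have e1 : C (r γ t / 2) + C (r γ t / 2) = C (r γ t) := by
    rw [← C_add]; congr 1; ring
  have e2 : C (r γ t / 2) * C (r γ t / 2) = C ((r γ t) ^ 2 / 4) := by
    rw [← C_mul]; congr 1; ring
  have e3 : C (r γ (t + 1) / 2) + C ((r γ t) ^ 2 / 4 - r γ (t + 1) / 2)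
      = C ((r γ t) ^ 2 / 4) := by
    rw [← C_add]; congr 1; ring
  linear_combination (P γ t) * e1 + e2 - e3

end Part1c

/- ## Part 2 : B polynomials -/

def bits (m : ℕ) : Finset ℕ := (Finset.range m).filter (fun k => m.testBit k)

lemma Bpoly_eq_prod (Q : ℕ → Polynomial ℝ) (m : ℕ) :
    Bpoly Q m = ∏ e ∈ bits m, Q (2 ^ e) := by
  rw [Bpoly, bits, Finset.prod_filter]

lemma bits_sum (m : ℕ) : (∑ e ∈ bits m, 2 ^ e) = m := by
  rw [bits, Finset.sum_filter]
  exact sum_testBit_aux m m (Nat.lt_two_pow_self (n := m))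

lemma mem_bits {m e : ℕ} : e ∈ bits m ↔ m.testBit e = true := by
  rw [bits, Finset.mem_filter, Finset.mem_range]
  constructor
  · exact fun h => h.2
  · intro h
    refine ⟨?_, h⟩
    by_contra hme
    push_neg at hme
    have h1 : 2 ^ e ≤ m := Nat.ge_two_pow_of_testBit h
    have h2 : e < 2 ^ e := Nat.lt_two_pow_self (n := e)
    omega

section Part2

variable (Q : ℕ → Polynomial ℝ) (hQmonic : ∀ n, (Q n).Monic) (hQdeg : ∀ n, (Q n).natDegree = n)

include hQmonic in
lemma Bpoly_monic (m : ℕ) : (Bpoly Q m).Monic := by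
  rw [Bpoly_eq_prod]
  exact monic_prod_of_monic _ _ fun e _ => hQmonic _

include hQmonic hQdeg in
lemma Bpoly_natDegree (m : ℕ) : (Bpoly Q m).natDegree = m := by
  rw [Bpoly_eq_prod, natDegree_prod_of_monic _ _ fun e _ => hQmonic _]
  calc (∑ e ∈ bits m, (Q (2 ^ e)).natDegree) = ∑ e ∈ bits m, 2 ^ e :=
        Finset.sum_congr rfl fun e _ => hQdeg _
    _ = m := bits_sum m

end Part2

lemma bits_facts (v j : ℕ) : v ∈ bits (2 ^ v * (2 * j + 1)) ∧
    ∀ e ∈ bits (2 ^ v * (2 * j + 1)), v ≤ e := by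
  set m := 2 ^ v * (2 * j + 1) with hm
  constructor
  · rw [mem_bits, Nat.testBit_eq_decide_div_mod_eq]
    have : m / 2 ^ v = 2 * j + 1 := by
      rw [hm, Nat.mul_div_cancel_left _ (pow_pos (by norm_num : (0:ℕ) < 2) v)]
    rw [this]
    simp [Nat.mul_add_mod]
  · intro e he
    by_contra hlt
    push_neg at hlt
    rw [mem_bits, Nat.testBit_eq_decide_div_mod_eq] at he
    have h1 : m = 2 ^ e * (2 ^ (v - e) * (2 * j + 1)) := by
      rw [hm, ← mul_assoc, ← pow_add]
      congr 2
      omega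
    have h2 : m / 2 ^ e = 2 ^ (v - e) * (2 * j + 1) := by
      rw [h1, Nat.mul_div_cancel_left _ (pow_pos (by norm_num : (0:ℕ) < 2) e)]
    have h3 : 2 ^ (v - e) = 2 * 2 ^ (v - e - 1) := by
      rw [← pow_succ']
      congr 1
      omega
    rw [h2, h3] at he
    have : (2 * 2 ^ (v - e - 1) * (2 * j + 1)) % 2 = 0 := by
      rw [mul_assoc]
      exact Nat.mul_mod_right 2 _
    rw [this] at he
    simp at he

/- ## Span machinery -/

def SQF (Q : ℕ → Polynomial ℝ) (v : ℕ) : Set (Polynomial ℝ) :=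
  {p | ∃ T : Finset ℕ, (∀ e ∈ T, v < e) ∧ p = Q (2 ^ v) * ∏ e ∈ T, Q (2 ^ e)}

section Span

variable (Q : ℕ → Polynomial ℝ) (cst : ℕ → ℝ)
  (hsq : ∀ t, (Q (2 ^ t)) ^ 2 = Q (2 ^ (t + 1)) + C (cst t)) (v : ℕ)

include hsq in
lemma mul_prod_mem_span : ∀ (N : ℕ) (e : ℕ), v < e → ∀ T : Finset ℕ, T.card ≤ N →
    (∀ x ∈ T, v < x) →
    Q (2 ^ e) * (Q (2 ^ v) * ∏ x ∈ T, Q (2 ^ x)) ∈ Submodule.span ℝ (SQF Q v) := by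
  intro N
  induction N with
  | zero =>
    intro e he T hcard hT
    have hT0 : T = ∅ := Finset.card_eq_zero.mp (by omega)
    subst hT0
    apply Submodule.subset_span
    refine ⟨{e}, by simpa using he, ?_⟩
    simp [Finset.prod_empty]
    ring
  | succ N ih =>
    intro e he T hcard hT
    by_cases heT : e ∈ T
    · have hprod : (∏ x ∈ T, Q (2 ^ x)) = Q (2 ^ e) * ∏ x ∈ T.erase e, Q (2 ^ x) :=
        (Finset.mul_prod_erase T _ heT).symm
      have hexp : Q (2 ^ e) * (Q (2 ^ v) * ∏ x ∈ T, Q (2 ^ x))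
          = Q (2 ^ (e + 1)) * (Q (2 ^ v) * ∏ x ∈ T.erase e, Q (2 ^ x))
            + cst e • (Q (2 ^ v) * ∏ x ∈ T.erase e, Q (2 ^ x)) := by
        rw [hprod, smul_eq_C_mul]
        have h2 : Q (2 ^ e) * Q (2 ^ e) = Q (2 ^ (e + 1)) + C (cst e) := by
          rw [← pow_two]; exact hsq e
        calc Q (2 ^ e) * (Q (2 ^ v) * (Q (2 ^ e) * ∏ x ∈ T.erase e, Q (2 ^ x)))
            = (Q (2 ^ e) * Q (2 ^ e)) * (Q (2 ^ v) * ∏ x ∈ T.erase e, Q (2 ^ x)) := by ring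
          _ = _ := by rw [h2]; ring
      rw [hexp]
      refine add_mem ?_ ?_
      · refine ih (e + 1) (by omega) (T.erase e) ?_ (fun x hx => hT x (Finset.mem_of_mem_erase hx))
        have := Finset.card_erase_of_mem heT
        omega
      · refine Submodule.smul_mem _ _ (Submodule.subset_span ?_)
        exact ⟨T.erase e, fun x hx => hT x (Finset.mem_of_mem_erase hx), rfl⟩
    · apply Submodule.subset_span
      refine ⟨insert e T, ?_, ?_⟩
      · intro x hx
        rcases Finset.mem_insert.mp hx with rfl | hx
        · exact he
        · exact hT x hx
      · rw [Finset.prod_insert heT]; ring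

include hsq in
lemma multiset_prod_mem_span : ∀ L : Multiset ℕ, (∀ e ∈ L, v < e) →
    Q (2 ^ v) * (L.map fun e => Q (2 ^ e)).prod ∈ Submodule.span ℝ (SQF Q v) := by
  intro L
  induction L using Multiset.induction with
  | empty =>
    intro _
    apply Submodule.subset_span
    exact ⟨∅, by simp, by simp⟩
  | cons e L ih =>
    intro hL
    have he : v < e := hL e (Multiset.mem_cons_self e L)
    have hmem := ih fun x hx => hL x (Multiset.mem_cons_of_mem hx)
    have hexp : Q (2 ^ v) * ((e ::ₘ L).map fun e => Q (2 ^ e)).prod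
        = Q (2 ^ e) * (Q (2 ^ v) * (L.map fun e => Q (2 ^ e)).prod) := by
      rw [Multiset.map_cons, Multiset.prod_cons]; ring
    rw [hexp]
    refine Submodule.span_induction
      (p := fun x _ => Q (2 ^ e) * x ∈ Submodule.span ℝ (SQF Q v)) ?_ ?_ ?_ ?_ hmem
    · intro x hx
      obtain ⟨T, hT, rfl⟩ := hx
      exact mul_prod_mem_span Q cst hsq v T.card e he T le_rfl hT
    · simp
    · intro x y _ _ hx hy; rw [mul_add]; exact add_mem hx hy
    · intro c x _ hx; rw [mul_smul_comm]; exact Submodule.smul_mem _ _ hx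

end Span

section Integral

variable (μ : Measure ℝ) (hμint : ∀ p : Polynomial ℝ, Integrable (fun x => p.eval x) μ)
  (Q : ℕ → Polynomial ℝ) (hQmonic : ∀ n, (Q n).Monic) (hQdeg : ∀ n, (Q n).natDegree = n)
  (hQorth : ∀ n : ℕ, ∀ p : Polynomial ℝ, p.degree < (n : WithBot ℕ) →
    ∫ x, (Q n).eval x * p.eval x ∂μ = 0)

include hμint hQmonic hQdeg hQorth in
lemma span_SQF_integral_zero (v : ℕ) (p : Polynomial ℝ)
    (hp : p ∈ Submodule.span ℝ (SQF Q v)) : ∫ x, p.eval x ∂μ = 0 := by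
  refine Submodule.span_induction (p := fun q _ => ∫ x, q.eval x ∂μ = 0) ?_ ?_ ?_ ?_ hp
  · intro q hq
    obtain ⟨T, hT, rfl⟩ := hq
    rcases Finset.eq_empty_or_nonempty T with rfl | hTne
    · have h0 := hQorth (2 ^ v) 1 (by
        refine lt_of_le_of_lt degree_one_le ?_
        exact_mod_cast pow_pos (by norm_num : (0:ℕ) < 2) v)
      simp only [eval_one, mul_one] at h0
      simpa [Finset.prod_empty] using h0
    · set E := T.max' hTne with hE
      have hET : E ∈ T := T.max'_mem hTne
      have hvE : v < E := hT E hET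
      set rest := Q (2 ^ v) * ∏ x ∈ T.erase E, Q (2 ^ x) with hrest
      have hprod : Q (2 ^ v) * ∏ x ∈ T, Q (2 ^ x) = Q (2 ^ E) * rest := by
        rw [hrest, ← Finset.mul_prod_erase T _ hET]; ring
      have hpm : (∏ x ∈ T.erase E, Q (2 ^ x)).Monic :=
        monic_prod_of_monic _ _ fun _ _ => hQmonic _
      have hrmon : rest.Monic := (hQmonic _).mul hpm
      have hrdeg : rest.natDegree = 2 ^ v + ∑ x ∈ T.erase E, 2 ^ x := by
        rw [hrest, (hQmonic _).natDegree_mul hpm, hQdeg,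
          natDegree_prod_of_monic _ _ fun _ _ => hQmonic _]
        congr 1
        exact Finset.sum_congr rfl fun x _ => hQdeg _
      have hsubset : insert v (T.erase E) ⊆ Finset.range E := by
        intro x hx
        rcases Finset.mem_insert.mp hx with rfl | hx
        · exact Finset.mem_range.mpr hvE
        · have h1 := Finset.mem_erase.mp hx
          have h2 : x ≤ E := T.le_max' x h1.2
          exact Finset.mem_range.mpr (by omega)
      have hvnot : v ∉ T.erase E := fun h =>
        absurd (hT v (Finset.mem_of_mem_erase h)) (lt_irrefl v)
      have hlt : rest.natDegree < 2 ^ E := by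
        rw [hrdeg]
        calc 2 ^ v + ∑ x ∈ T.erase E, 2 ^ x = ∑ x ∈ insert v (T.erase E), 2 ^ x :=
              (Finset.sum_insert hvnot).symm
          _ ≤ ∑ x ∈ Finset.range E, 2 ^ x := Finset.sum_le_sum_of_subset hsubset
          _ = 2 ^ E - 1 := sum_range_two_pow E
          _ < 2 ^ E := by have := pow_pos (by norm_num : (0:ℕ) < 2) E; omega
      have hdeg : rest.degree < ((2 ^ E : ℕ) : WithBot ℕ) := by
        rw [degree_eq_natDegree hrmon.ne_zero]
        exact_mod_cast hlt
      have h0 := hQorth (2 ^ E) rest hdeg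
      rw [hprod]
      simpa [eval_mul] using h0
  · simp
  · intro x y _ _ hx hy
    simp only [eval_add]
    rw [integral_add (hμint x) (hμint y), hx, hy, add_zero]
  · intro c x _ hx
    simp only [eval_smul, smul_eq_mul]
    rw [integral_const_mul, hx, mul_zero]

include hμint hQmonic hQdeg hQorth in
lemma master_integral_zero (cst : ℕ → ℝ)
    (hsq : ∀ t, (Q (2 ^ t)) ^ 2 = Q (2 ^ (t + 1)) + C (cst t))
    (v : ℕ) (L : Multiset ℕ) (hL : ∀ e ∈ L, v < e) :
    ∫ x, (Q (2 ^ v) * (L.map fun e => Q (2 ^ e)).prod).eval x ∂μ = 0 :=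
  span_SQF_integral_zero μ hμint Q hQmonic hQdeg hQorth v _
    (multiset_prod_mem_span Q cst hsq v L hL)

end Integral

section KO

variable (μ : Measure ℝ) (hμint : ∀ p : Polynomial ℝ, Integrable (fun x => p.eval x) μ)
  (Q : ℕ → Polynomial ℝ) (hQmonic : ∀ n, (Q n).Monic) (hQdeg : ∀ n, (Q n).natDegree = n)
  (hQorth : ∀ n : ℕ, ∀ p : Polynomial ℝ, p.degree < (n : WithBot ℕ) →
    ∫ x, (Q n).eval x * p.eval x ∂μ = 0)
  (cst : ℕ → ℝ) (hsq : ∀ t, (Q (2 ^ t)) ^ 2 = Q (2 ^ (t + 1)) + C (cst t))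

lemma Bpoly_split (v j : ℕ) : Bpoly Q (2 ^ v * (2 * j + 1))
    = Q (2 ^ v) * ((((bits (2 ^ v * (2 * j + 1))).erase v).val.map fun e => Q (2 ^ e)).prod) := by
  obtain ⟨hv, _⟩ := bits_facts v j
  rw [Bpoly_eq_prod, ← Finset.mul_prod_erase _ _ hv]
  congr 1

lemma bits_erase_gt (v j : ℕ) : ∀ e ∈ ((bits (2 ^ v * (2 * j + 1))).erase v).val, v < e := by
  intro e he
  have he' : e ∈ (bits (2 ^ v * (2 * j + 1))).erase v := he
  have h1 := Finset.mem_erase.mp he'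
  have h2 := (bits_facts v j).2 e h1.2
  omega

include hμint hQmonic hQdeg hQorth hsq in
lemma B_integral_zero (v j : ℕ) :
    ∫ x, (Bpoly Q (2 ^ v * (2 * j + 1))).eval x ∂μ = 0 := by
  rw [Bpoly_split Q v j]
  exact master_integral_zero μ hμint Q hQmonic hQdeg hQorth cst hsq v _ (bits_erase_gt v j)

include hμint hQmonic hQdeg hQorth hsq in
lemma B_orth_aux (v j v' j' : ℕ) (hvv : v < v') :
    ∫ x, (Bpoly Q (2 ^ v * (2 * j + 1)) * Bpoly Q (2 ^ v' * (2 * j' + 1))).eval x ∂μ = 0 := by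
  set L : Multiset ℕ := ((bits (2 ^ v * (2 * j + 1))).erase v).val
    + (bits (2 ^ v' * (2 * j' + 1))).val with hL
  have hLgt : ∀ e ∈ L, v < e := by
    intro e he
    rcases Multiset.mem_add.mp he with h | h
    · exact bits_erase_gt v j e h
    · have : e ∈ bits (2 ^ v' * (2 * j' + 1)) := h
      have := (bits_facts v' j').2 e this
      omega
  have hprod : Bpoly Q (2 ^ v * (2 * j + 1)) * Bpoly Q (2 ^ v' * (2 * j' + 1))
      = Q (2 ^ v) * (L.map fun e => Q (2 ^ e)).prod := by
    rw [hL, Multiset.map_add, Multiset.prod_add, Bpoly_split Q v j]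
    have h2 : Bpoly Q (2 ^ v' * (2 * j' + 1))
        = (((bits (2 ^ v' * (2 * j' + 1))).val).map fun e => Q (2 ^ e)).prod := by
      rw [Bpoly_eq_prod, Finset.prod_eq_multiset_prod]
    rw [h2]
    ring
  rw [hprod]
  exact master_integral_zero μ hμint Q hQmonic hQdeg hQorth cst hsq v _ hLgt

include hμint hQmonic hQdeg hQorth hsq in
lemma B_orth (v j v' j' : ℕ) (hvv : v ≠ v') :
    ∫ x, (Bpoly Q (2 ^ v * (2 * j + 1))).eval x
      * (Bpoly Q (2 ^ v' * (2 * j' + 1))).eval x ∂μ = 0 := by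
  rcases lt_or_gt_of_ne hvv with h | h
  · have := B_orth_aux μ hμint Q hQmonic hQdeg hQorth cst hsq v j v' j' h
    simpa [eval_mul] using this
  · have := B_orth_aux μ hμint Q hQmonic hQdeg hQorth cst hsq v' j' v j h
    simp only [eval_mul] at this
    rw [← this]
    congr 1
    funext x
    ring
end KO

section SpanB

variable (Q : ℕ → Polynomial ℝ) (hQmonic : ∀ n, (Q n).Monic) (hQdeg : ∀ n, (Q n).natDegree = n)

include hQmonic hQdeg in
lemma span_B (N : ℕ) : ∀ (d : ℕ) (p : Polynomial ℝ), p.natDegree ≤ d → p.natDegree < N →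
    p ∈ Submodule.span ℝ {q : Polynomial ℝ | ∃ m, m < N ∧ q = Bpoly Q m} := by
  intro d
  induction d using Nat.strong_induction_on with
  | _ d ih =>
    intro p hpd hpN
    by_cases hp0 : p = 0
    · rw [hp0]; exact Submodule.zero_mem _
    set m := p.natDegree with hm
    have hBmon := Bpoly_monic Q hQmonic m
    have hBdeg := Bpoly_natDegree Q hQmonic hQdeg m
    have hlc : p.leadingCoeff ≠ 0 := leadingCoeff_ne_zero.mpr hp0
    set q := p - C p.leadingCoeff * Bpoly Q m with hq
    have hmem2 : C p.leadingCoeff * Bpoly Q m ∈ Submodule.span ℝ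
        {q : Polynomial ℝ | ∃ m', m' < N ∧ q = Bpoly Q m'} := by
      rw [← smul_eq_C_mul]
      exact Submodule.smul_mem _ _ (Submodule.subset_span ⟨m, hpN, rfl⟩)
    by_cases hq0 : q = 0
    · have h1 : p - C p.leadingCoeff * Bpoly Q m = 0 := by rw [← hq]; exact hq0
      rw [sub_eq_zero] at h1
      rw [h1]
      exact hmem2
    · have hdegq : q.degree < p.degree := by
        apply degree_sub_lt
        · rw [degree_mul, degree_C hlc, degree_eq_natDegree hBmon.ne_zero, hBdeg,
            degree_eq_natDegree hp0, ← hm, zero_add]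
        · exact hp0
        · rw [leadingCoeff_mul, leadingCoeff_C, hBmon.leadingCoeff, mul_one]
      have hqm : q.natDegree < m := by
        rw [degree_eq_natDegree hp0, ← hm] at hdegq
        exact (natDegree_lt_iff_degree_lt hq0).mpr hdegq
      have hqmem : q ∈ Submodule.span ℝ
          {q : Polynomial ℝ | ∃ m', m' < N ∧ q = Bpoly Q m'} :=
        ih q.natDegree (by omega) q le_rfl (by omega)
      have hpq : p = q + C p.leadingCoeff * Bpoly Q m := by rw [hq]; ring
      rw [hpq]
      exact Submodule.add_mem _ hqmem hmem2

end SpanB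

theorem stmt_13 (γ : ℕ → ℝ) (hγ : ∀ s : ℕ, 0 < γ (s + 1) ∧ γ (s + 1) < 1 / 4)
    (μ : Measure ℝ) [IsProbabilityMeasure μ]
    (hμint : ∀ p : Polynomial ℝ, Integrable (fun x => p.eval x) μ)
    (hμpos : ∀ p : Polynomial ℝ, p ≠ 0 → 0 < ∫ x, (p.eval x) ^ 2 ∂μ)
    (hμconv : ∀ p : Polynomial ℝ,
      Tendsto (fun s => nuInt γ s (fun x => p.eval x)) atTop (nhds (∫ x, p.eval x ∂μ)))
    (Q : ℕ → Polynomial ℝ) (hQmonic : ∀ n, (Q n).Monic) (hQdeg : ∀ n, (Q n).natDegree = n)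
    (hQorth : ∀ n : ℕ, ∀ p : Polynomial ℝ, p.degree < (n : WithBot ℕ) →
      ∫ x, (Q n).eval x * p.eval x ∂μ = 0)
    (n s k : ℕ) (hn : n = 2 ^ s * (2 * k + 1)) :
    ∃! a : Fin k → ℝ,
      Q n = (∑ j : Fin k, C (a j) * Bpoly Q ((2 * (j : ℕ) + 1) * 2 ^ s)) +
        Bpoly Q ((2 * k + 1) * 2 ^ s) := by
  classical
  have hsq : ∀ t, (Q (2 ^ t)) ^ 2 = Q (2 ^ (t + 1))
      + C ((r γ t) ^ 2 / 4 - r γ (t + 1) / 2) :=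
    Q_sq_s13 hγ μ hμint hμpos hμconv Q hQmonic hQdeg hQorth
  set cst : ℕ → ℝ := fun t => (r γ t) ^ 2 / 4 - r γ (t + 1) / 2 with hcst
  have hint2 : ∀ a b : Polynomial ℝ, Integrable (fun x => a.eval x * b.eval x) μ := by
    intro a b; simpa [eval_mul] using hμint (a * b)
  have hnpos : 0 < n := by
    rw [hn]; positivity
  have horder : (2 * k + 1) * 2 ^ s = n := by rw [hn]; ring
  -- the B polynomials involved
  set b : Polynomial ℝ := Bpoly Q ((2 * k + 1) * 2 ^ s) with hb
  set w : Polynomial ℝ := b - Q n with hw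
  set Bj : Fin k → Polynomial ℝ := fun j => Bpoly Q ((2 * (j : ℕ) + 1) * 2 ^ s) with hBj
  set DSet : Set (Polynomial ℝ) := Set.range Bj with hDSet
  set USet : Set (Polynomial ℝ) :=
    {q | ∃ m, m < n ∧ (∀ j : ℕ, m ≠ 2 ^ s * (2 * j + 1)) ∧ q = Bpoly Q m} with hUSet
  -- step 1 : w lies in span USet ⊔ span DSet
  have hwdeg : w.natDegree < n := by
    by_cases hw0 : w = 0
    · rw [hw0]; simpa using hnpos
    · have hbmon : b.Monic := Bpoly_monic Q hQmonic _
      have hbdeg : b.natDegree = n := by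
        rw [hb, Bpoly_natDegree Q hQmonic hQdeg, horder]
      have h1 : b.degree = (Q n).degree := by
        rw [degree_eq_natDegree hbmon.ne_zero, degree_eq_natDegree (hQmonic n).ne_zero,
          hbdeg, hQdeg]
      have h2 := degree_sub_lt h1 hbmon.ne_zero
        (by rw [hbmon.leadingCoeff, (hQmonic n).leadingCoeff])
      rw [degree_eq_natDegree hbmon.ne_zero, hbdeg] at h2
      rw [← hw] at h2
      exact (natDegree_lt_iff_degree_lt hw0).mpr h2
  have hwmem : w ∈ Submodule.span ℝ USet ⊔ Submodule.span ℝ DSet := by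
    have h1 : w ∈ Submodule.span ℝ {q : Polynomial ℝ | ∃ m, m < n ∧ q = Bpoly Q m} :=
      span_B Q hQmonic hQdeg n w.natDegree w le_rfl hwdeg
    refine Submodule.span_le.mpr ?_ h1
    rintro q ⟨m, hm, rfl⟩
    by_cases hodd : ∃ j : ℕ, m = 2 ^ s * (2 * j + 1)
    · obtain ⟨j, rfl⟩ := hodd
      have hjk : j < k := by
        have h2 : 2 ^ s * (2 * j + 1) < 2 ^ s * (2 * k + 1) := by rw [← hn]; exact hm
        have h3 := Nat.lt_of_mul_lt_mul_left h2
        omega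
      have : Bpoly Q (2 ^ s * (2 * j + 1)) = Bj ⟨j, hjk⟩ := by
        rw [hBj]; congr 1; ring
      rw [this]
      exact SetLike.mem_coe.mpr (Submodule.mem_sup_right
        (Submodule.subset_span (Set.mem_range_self _)))
    · push_neg at hodd
      exact SetLike.mem_coe.mpr (Submodule.mem_sup_left
        (Submodule.subset_span ⟨m, hm, hodd, rfl⟩))
  obtain ⟨u, hu, v, hv, huv⟩ := Submodule.mem_sup.mp hwmem
  -- orthogonality of w and DSet elements against span USet
  have hgenU : ∀ q ∈ USet, (∫ x, w.eval x * q.eval x ∂μ) = 0 := by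
    rintro q ⟨m, hm, hmodd, rfl⟩
    have hB : ∫ x, b.eval x * (Bpoly Q m).eval x ∂μ = 0 := by
      rcases Nat.eq_zero_or_pos m with rfl | hmpos
      · have hB0 : Bpoly Q 0 = 1 := by simp [Bpoly]
        rw [hB0]
        simp only [eval_one, mul_one]
        have := B_integral_zero μ hμint Q hQmonic hQdeg hQorth cst hsq s k
        rw [hb, horder, hn]
        exact this
      · obtain ⟨v', j', hm'⟩ := odd_part_exists m hmpos
        have hvs : s ≠ v' := by
          intro hsv
          exact hmodd j' (by rw [hm', hsv])
        have := B_orth μ hμint Q hQmonic hQdeg hQorth cst hsq s k v' j' hvs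
        rw [← hm'] at this
        rw [hb, horder, hn]
        exact this
    have hQn : ∫ x, (Q n).eval x * (Bpoly Q m).eval x ∂μ = 0 := by
      refine hQorth n (Bpoly Q m) ?_
      rw [degree_eq_natDegree (Bpoly_monic Q hQmonic m).ne_zero,
        Bpoly_natDegree Q hQmonic hQdeg]
      exact_mod_cast hm
    have : (fun x => w.eval x * (Bpoly Q m).eval x)
        = fun x => b.eval x * (Bpoly Q m).eval x - (Q n).eval x * (Bpoly Q m).eval x := by
      funext x; rw [hw]; simp [eval_sub]; ring
    rw [this, integral_sub (hint2 _ _) (hint2 _ _), hB, hQn, sub_zero]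
  have hspanU : ∀ p : Polynomial ℝ, ∀ x ∈ Submodule.span ℝ USet,
      (∀ q ∈ USet, (∫ z, p.eval z * q.eval z ∂μ) = 0) →
      (∫ z, p.eval z * x.eval z ∂μ) = 0 := by
    intro p x hx hgen
    refine Submodule.span_induction
      (p := fun x _ => (∫ z, p.eval z * x.eval z ∂μ) = 0) hgen ?_ ?_ ?_ hx
    · simp
    · intro x y _ _ hx' hy'
      have : (fun z => p.eval z * (x + y).eval z)
          = fun z => p.eval z * x.eval z + p.eval z * y.eval z := by
        funext z; simp [eval_add]; ring
      rw [this, integral_add (hint2 _ _) (hint2 _ _), hx', hy', add_zero]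
    · intro c x _ hx'
      have : (fun z => p.eval z * (c • x).eval z)
          = fun z => c * (p.eval z * x.eval z) := by
        funext z; simp [eval_smul]; ring
      rw [this, integral_const_mul, hx', mul_zero]
  -- DSet generators orthogonal to USet generators
  have hgenD : ∀ (j : Fin k), ∀ q ∈ USet, (∫ z, (Bj j).eval z * q.eval z ∂μ) = 0 := by
    rintro j q ⟨m, hm, hmodd, rfl⟩
    rcases Nat.eq_zero_or_pos m with rfl | hmpos
    · have hB0 : Bpoly Q 0 = 1 := by simp [Bpoly]
      rw [hB0]
      simp only [eval_one, mul_one]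
      have := B_integral_zero μ hμint Q hQmonic hQdeg hQorth cst hsq s (j : ℕ)
      have harg : (2 * (j : ℕ) + 1) * 2 ^ s = 2 ^ s * (2 * (j : ℕ) + 1) := by ring
      simp only [hBj]
      rw [harg]
      exact this
    · obtain ⟨v', j', hm'⟩ := odd_part_exists m hmpos
      have hvs : s ≠ v' := fun hsv => hmodd j' (by rw [hm', hsv])
      have := B_orth μ hμint Q hQmonic hQdeg hQorth cst hsq s (j : ℕ) v' j' hvs
      have harg : (2 * (j : ℕ) + 1) * 2 ^ s = 2 ^ s * (2 * (j : ℕ) + 1) := by ring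
      rw [← hm'] at this
      simp only [hBj]
      rw [harg]
      exact this
  have hDU : ∀ y ∈ Submodule.span ℝ DSet, ∀ x ∈ Submodule.span ℝ USet,
      (∫ z, y.eval z * x.eval z ∂μ) = 0 := by
    intro y hy
    refine Submodule.span_induction
      (p := fun y _ => ∀ x ∈ Submodule.span ℝ USet, (∫ z, y.eval z * x.eval z ∂μ) = 0)
      ?_ ?_ ?_ ?_ hy
    · rintro y ⟨j, rfl⟩ x hx
      exact hspanU _ x hx (hgenD j)
    · intro x _; simp
    · intro y1 y2 _ _ h1 h2 x hx
      have : (fun z => (y1 + y2).eval z * x.eval z)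
          = fun z => y1.eval z * x.eval z + y2.eval z * x.eval z := by
        funext z; simp [eval_add]; ring
      rw [this, integral_add (hint2 _ _) (hint2 _ _), h1 x hx, h2 x hx, add_zero]
    · intro c y1 _ h1 x hx
      have : (fun z => (c • y1).eval z * x.eval z)
          = fun z => c * (y1.eval z * x.eval z) := by
        funext z; simp [eval_smul]; ring
      rw [this, integral_const_mul, h1 x hx, mul_zero]
  -- conclude u = 0
  have hu0 : u = 0 := by
    by_contra hu0
    have h1 : (∫ z, w.eval z * u.eval z ∂μ) = 0 := hspanU w u hu hgenU
    have h2 : (∫ z, v.eval z * u.eval z ∂μ) = 0 := hDU v hv u hu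
    have h3 : (∫ z, (u.eval z) ^ 2 ∂μ) = 0 := by
      have hfun : (fun z => (u.eval z) ^ 2)
          = fun z => w.eval z * u.eval z - v.eval z * u.eval z := by
        funext z
        have : w.eval z = u.eval z + v.eval z := by rw [← huv]; simp [eval_add]
        rw [this]; ring
      rw [hfun, integral_sub (hint2 _ _) (hint2 _ _), h1, h2, sub_zero]
    exact absurd h3 (ne_of_gt (hμpos u hu0))
  have hwv : w = v := by rw [hu0, zero_add] at huv; exact huv.symm
  -- extract the coefficients
  rw [hDSet] at hv
  obtain ⟨c, hc⟩ := (Submodule.mem_span_range_iff_exists_fun ℝ).mp (hwv ▸ hv)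
  have hsum : (∑ j : Fin k, C (-(c j)) * Bj j) = Q n - b := by
    have h1 : (∑ j : Fin k, C (-(c j)) * Bj j) = -(∑ j : Fin k, c j • Bj j) := by
      rw [← Finset.sum_neg_distrib]
      refine Finset.sum_congr rfl fun j _ => ?_
      rw [smul_eq_C_mul, C_neg]; ring
    rw [h1, hc, hw]; ring
  refine ⟨fun j => -(c j), ?_, ?_⟩
  · show Q n = (∑ j : Fin k, C (-(c j)) * Bj j) + b
    rw [hsum]; ring
  · -- uniqueness
    intro a' ha'
    have ha : Q n = (∑ j : Fin k, C (-(c j)) * Bj j) + b := by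
      rw [hsum]; ring
    set a : Fin k → ℝ := fun j => -(c j) with hadef
    have heq : (∑ j : Fin k, C (a' j - a j) * Bj j) = 0 := by
      have h1 : (∑ j : Fin k, C (a' j) * Bj j) = (∑ j : Fin k, C (a j) * Bj j) := by
        have := ha'.symm.trans ha
        exact add_right_cancel this
      calc (∑ j : Fin k, C (a' j - a j) * Bj j)
          = (∑ j : Fin k, (C (a' j) * Bj j - C (a j) * Bj j)) := by
            refine Finset.sum_congr rfl fun j _ => ?_
            rw [C_sub]; ring
        _ = (∑ j : Fin k, C (a' j) * Bj j) - (∑ j : Fin k, C (a j) * Bj j) :=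
            Finset.sum_sub_distrib _ _
        _ = 0 := by rw [h1, sub_self]
    by_contra hne
    have hne' : a' ≠ a := hne
    obtain ⟨j0, hj0⟩ := Function.ne_iff.mp hne'
    set F : Finset (Fin k) := Finset.univ.filter (fun j => a' j ≠ a j) with hF
    have hFne : F.Nonempty := ⟨j0, by simp [hF, hj0]⟩
    set J := F.max' hFne with hJ
    have hJF : J ∈ F := F.max'_mem hFne
    have hJne : a' J - a J ≠ 0 := by
      have := (Finset.mem_filter.mp hJF).2
      intro h; exact this (by linarith [sub_eq_zero.mp h])
    have hcoeff : ((∑ j : Fin k, C (a' j - a j) * Bj j)).coeff ((2 * (J : ℕ) + 1) * 2 ^ s)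
        = a' J - a J := by
      rw [finset_sum_coeff]
      rw [Finset.sum_eq_single_of_mem J (Finset.mem_univ J)]
      · rw [coeff_C_mul, hBj]
        have hmon := Bpoly_monic Q hQmonic ((2 * (J : ℕ) + 1) * 2 ^ s)
        have hdeg := Bpoly_natDegree Q hQmonic hQdeg ((2 * (J : ℕ) + 1) * 2 ^ s)
        rw [← hdeg, hmon.coeff_natDegree, mul_one]
      · intro j _ hjJ
        by_cases hja : a' j = a j
        · rw [hja, sub_self, C_0, zero_mul, coeff_zero]
        · have hjF : j ∈ F := Finset.mem_filter.mpr ⟨Finset.mem_univ j, hja⟩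
          have hjle : j ≤ J := F.le_max' j hjF
          have hjlt : (j : ℕ) < (J : ℕ) := by
            rcases lt_or_eq_of_le hjle with h | h
            · exact h
            · exact absurd h hjJ
          refine coeff_eq_zero_of_natDegree_lt ?_
          refine lt_of_le_of_lt (natDegree_C_mul_le _ _) ?_
          rw [hBj, Bpoly_natDegree Q hQmonic hQdeg]
          have h2s : 0 < 2 ^ s := pow_pos (by norm_num : (0:ℕ) < 2) s
          have : 2 * (j : ℕ) + 1 < 2 * (J : ℕ) + 1 := by omega
          exact (Nat.mul_lt_mul_right h2s).mpr this
    rw [heq, coeff_zero] at hcoeff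
    exact hJne hcoeff.symm
end
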